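/- arXiv:1902.04817 — 2 statements merged into one kernel-verified Lean document; each statement's English description precedes it below -/
import Mathlib

section
/- (Corollary: five-way characterization.) Let A be a fixed finite MTL-chain, P a predicate language, and T a set of P-sentences that has an A-model. The following are equivalent: (1) T is closed under weak A-direct products and homomorphisms; (2) T is closed under A-direct products and homomorphisms; (3) T is axiomatized by a set of ∧-primitive sentences; (4) T is axiomatized by a set of &-primitive sentences; (5) T is axiomatized by a set of positive-primitive (∧&-primitive) sentences. -/
noncomputable section
open Classical

universe u

/-- A finite MTL-chain: a finite linearly ordered set with least and greatest
elements, a commutative monoid operation `*` with unit `1 = ⊤` that is monotone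
in each argument, and the residuum determined by `a * b ≤ c ↔ a ≤ resid b c`. -/
class MTLChain (A : Type u) extends Fintype A, LinearOrder A, CommMonoid A, BoundedOrder A where
  one_eq_top : (1 : A) = ⊤
  mul_mono : ∀ {a b : A}, a ≤ b → ∀ c : A, c * a ≤ c * b
  resid : A → A → A
  resid_galois : ∀ a b c : A, a * b ≤ c ↔ a ≤ resid b c

noncomputable instance MTLChain.toCompleteLinearOrder (A : Type u) [MTLChain A] :
    CompleteLinearOrder A :=
  Fintype.toCompleteLinearOrder A

/-- A predicate language: predicate symbols and function symbols, each with
a finite arity.  (Nullary predicates are truth constants, nullary functions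
are individual constants.)  Crisp equality `≈` is built into formulas. -/
structure Lang : Type (u + 1) where
  Pred : Type u
  predAr : Pred → ℕ
  Func : Type u
  funcAr : Func → ℕ

variable {A : Type u} [MTLChain A] {L : Lang.{u}}

/-- Terms of a predicate language, with variables indexed by `ℕ`. -/
inductive Term (L : Lang.{u}) : Type u where
  | var : ℕ → Term L
  | func (f : L.Func) (ts : Fin (L.funcAr f) → Term L) : Term L

/-- Formulas: atomic formulas (predicates applied to terms, and crisp equality),
strong conjunction `&`, weak conjunction `∧`, weak disjunction `∨`,
implication `→`, and the quantifiers. -/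
inductive Formula (L : Lang.{u}) : Type u where
  | rel (P : L.Pred) (ts : Fin (L.predAr P) → Term L) : Formula L
  | eq (t₁ t₂ : Term L) : Formula L
  | sconj (φ ψ : Formula L) : Formula L
  | wconj (φ ψ : Formula L) : Formula L
  | wdisj (φ ψ : Formula L) : Formula L
  | impl (φ ψ : Formula L) : Formula L
  | all (x : ℕ) (φ : Formula L) : Formula L
  | ex (x : ℕ) (φ : Formula L) : Formula L

/-- An `A`-structure for the language `L`: a nonempty domain, an `A`-valued
interpretation of each predicate symbol, and an interpretation of each
function symbol. -/
structure Structure (L : Lang.{u}) (A : Type u) [MTLChain A] : Type (u + 1) where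
  Dom : Type u
  [dom_nonempty : Nonempty Dom]
  funMap (f : L.Func) : (Fin (L.funcAr f) → Dom) → Dom
  relMap (P : L.Pred) : (Fin (L.predAr P) → Dom) → A

attribute [instance] Structure.dom_nonempty

/-- Value of a term under an evaluation of the variables. -/
def Term.val (M : Structure L A) (v : ℕ → M.Dom) : Term L → M.Dom
  | .var n => v n
  | .func f ts => M.funMap f fun i => (ts i).val M v

/-- Truth value of a formula in an `A`-structure under an evaluation of the
variables.  Equality is crisp, `&` is interpreted by `*`, `∧` by minimum,
`∨` by maximum, `→` by the residuum, `∀` by infimum (= minimum) and `∃` by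
supremum (= maximum) over the domain. -/
def Formula.val (M : Structure L A) : Formula L → (ℕ → M.Dom) → A
  | .rel P ts, v => M.relMap P fun i => (ts i).val M v
  | .eq t₁ t₂, v => if t₁.val M v = t₂.val M v then 1 else ⊥
  | .sconj φ ψ, v => φ.val M v * ψ.val M v
  | .wconj φ ψ, v => φ.val M v ⊓ ψ.val M v
  | .wdisj φ ψ, v => φ.val M v ⊔ ψ.val M v
  | .impl φ ψ, v => MTLChain.resid (φ.val M v) (ψ.val M v)
  | .all x φ, v => ⨅ a : M.Dom, φ.val M (Function.update v x a)
  | .ex x φ, v => ⨆ a : M.Dom, φ.val M (Function.update v x a)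

/-- Free variables of a term. -/
def Term.fvars : Term L → Set ℕ
  | .var n => {n}
  | .func _ ts => ⋃ i, (ts i).fvars

/-- Free variables of a formula. -/
def Formula.fvars : Formula L → Set ℕ
  | .rel _ ts => ⋃ i, (ts i).fvars
  | .eq t₁ t₂ => t₁.fvars ∪ t₂.fvars
  | .sconj φ ψ => φ.fvars ∪ ψ.fvars
  | .wconj φ ψ => φ.fvars ∪ ψ.fvars
  | .wdisj φ ψ => φ.fvars ∪ ψ.fvars
  | .impl φ ψ => φ.fvars ∪ ψ.fvars
  | .all x φ => φ.fvars \ {x}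
  | .ex x φ => φ.fvars \ {x}

/-- A sentence is a formula with no free variables. -/
def Formula.IsSentence (φ : Formula L) : Prop := φ.fvars = ∅

/-- `φ` is valid in `M` (i.e. `‖φ‖_M = 1`). -/
def Valid (M : Structure L A) (φ : Formula L) : Prop :=
  ∀ v : ℕ → M.Dom, φ.val M v = 1

/-- `M` is an `A`-model of the set of sentences `T`. -/
def Models (M : Structure L A) (T : Set (Formula L)) : Prop :=
  ∀ φ ∈ T, Valid M φ

/-- Two structures are elementarily equivalent if the same sentences are valid
in both (i.e. they have the same theory). -/
def ElemEquiv (M N : Structure L A) : Prop :=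
  ∀ φ : Formula L, φ.IsSentence → (Valid M φ ↔ Valid N φ)

/-- `g : M → N` is a homomorphism of `A`-structures: it commutes with the
interpretation of function symbols, and preserves truth (value `1`) of
atomic predicates. -/
structure IsHom (M N : Structure L A) (g : M.Dom → N.Dom) : Prop where
  map_fun : ∀ (f : L.Func) (d : Fin (L.funcAr f) → M.Dom),
    g (M.funMap f d) = N.funMap f (g ∘ d)
  map_rel : ∀ (P : L.Pred) (d : Fin (L.predAr P) → M.Dom),
    M.relMap P d = 1 → N.relMap P (g ∘ d) = 1

/-- Atomic formulas. -/
inductive IsAtomicFormula : Formula L → Prop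
  | rel (P : L.Pred) (ts : Fin (L.predAr P) → Term L) : IsAtomicFormula (.rel P ts)
  | eq (t₁ t₂ : Term L) : IsAtomicFormula (.eq t₁ t₂)

/-- Quantifier-free formulas built from atomic formulas using only `∧` and `&`. -/
inductive QFConj : Formula L → Prop
  | atom {φ : Formula L} : IsAtomicFormula φ → QFConj φ
  | sconj {φ ψ : Formula L} : QFConj φ → QFConj ψ → QFConj (.sconj φ ψ)
  | wconj {φ ψ : Formula L} : QFConj φ → QFConj ψ → QFConj (.wconj φ ψ)

/-- Quantifier-free formulas built from atomic formulas using only `∧`. -/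
inductive QFWConj : Formula L → Prop
  | atom {φ : Formula L} : IsAtomicFormula φ → QFWConj φ
  | wconj {φ ψ : Formula L} : QFWConj φ → QFWConj ψ → QFWConj (.wconj φ ψ)

/-- Quantifier-free formulas built from atomic formulas using only `&`. -/
inductive QFSConj : Formula L → Prop
  | atom {φ : Formula L} : IsAtomicFormula φ → QFSConj φ
  | sconj {φ ψ : Formula L} : QFSConj φ → QFSConj ψ → QFSConj (.sconj φ ψ)

/-- Quantifier-free formulas built from atomic formulas using only `∧`, `∨` and `&`. -/
inductive QFPos : Formula L → Prop
  | atom {φ : Formula L} : IsAtomicFormula φ → QFPos φ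
  | sconj {φ ψ : Formula L} : QFPos φ → QFPos ψ → QFPos (.sconj φ ψ)
  | wconj {φ ψ : Formula L} : QFPos φ → QFPos ψ → QFPos (.wconj φ ψ)
  | wdisj {φ ψ : Formula L} : QFPos φ → QFPos ψ → QFPos (.wdisj φ ψ)

/-- Positive-primitive (∧&-primitive) formulas: `(∃ x̄) ψ` with `ψ`
quantifier-free built from atomic formulas using only `∧` and `&`. -/
inductive IsPP : Formula L → Prop
  | base {φ : Formula L} : QFConj φ → IsPP φ
  | ex {φ : Formula L} (x : ℕ) : IsPP φ → IsPP (.ex x φ)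

/-- ∧-primitive formulas. -/
inductive IsWPrimitive : Formula L → Prop
  | base {φ : Formula L} : QFWConj φ → IsWPrimitive φ
  | ex {φ : Formula L} (x : ℕ) : IsWPrimitive φ → IsWPrimitive (.ex x φ)

/-- &-primitive formulas. -/
inductive IsSPrimitive : Formula L → Prop
  | base {φ : Formula L} : QFSConj φ → IsSPrimitive φ
  | ex {φ : Formula L} (x : ℕ) : IsSPrimitive φ → IsSPrimitive (.ex x φ)

/-- Existential positive formulas: `(∃ x̄) ψ` with `ψ` quantifier-free built
from atomic formulas using only `∧`, `∨` and `&`. -/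
inductive IsExPos : Formula L → Prop
  | base {φ : Formula L} : QFPos φ → IsExPos φ
  | ex {φ : Formula L} (x : ℕ) : IsExPos φ → IsExPos (.ex x φ)

/-- The `A`-direct product of a nonempty family of `A`-structures:
cartesian product domain, coordinatewise interpretation of function symbols,
and predicates interpreted by the minimum of the coordinatewise values. -/
def dirProd {I : Type u} [Nonempty I] (Ms : I → Structure L A) : Structure L A where
  Dom := ∀ i, (Ms i).Dom
  funMap f d := fun i => (Ms i).funMap f fun k => d k i
  relMap P d := ⨅ i, (Ms i).relMap P fun k => d k i

/-- The data of a weak `A`-direct product of a family of `A`-structures: an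
interpretation of the predicate symbols on the cartesian product taking value
`1` exactly when all the coordinatewise values are `1`. -/
structure WeakProdData {I : Type u} (Ms : I → Structure L A) : Type u where
  relMap (P : L.Pred) : (Fin (L.predAr P) → ∀ i, (Ms i).Dom) → A
  rel_one_iff : ∀ (P : L.Pred) (d : Fin (L.predAr P) → ∀ i, (Ms i).Dom),
    relMap P d = 1 ↔ ∀ i, (Ms i).relMap P (fun k => d k i) = 1

/-- The weak `A`-direct product structure determined by such data. -/
def WeakProdData.toStructure {I : Type u} [Nonempty I] {Ms : I → Structure L A}
    (W : WeakProdData Ms) : Structure L A where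
  Dom := ∀ i, (Ms i).Dom
  funMap f d := fun i => (Ms i).funMap f fun k => d k i
  relMap := W.relMap
namespace PPTfae

variable {A : Type u} [MTLChain A] {L : Lang.{u}}

lemma le_one (a : A) : a ≤ 1 := by rw [MTLChain.one_eq_top]; exact le_top

lemma eq_one_of_one_le {a : A} (h : 1 ≤ a) : a = 1 := le_antisymm (le_one a) h

lemma mul_eq_one {a b : A} : a * b = 1 ↔ a = 1 ∧ b = 1 := by
  constructor
  · intro h
    have hb : a * b ≤ a * 1 := MTLChain.mul_mono (le_one b) a
    have ha : b * a ≤ b * 1 := MTLChain.mul_mono (le_one a) b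
    rw [mul_one, h] at hb
    rw [mul_one, mul_comm, h] at ha
    exact ⟨eq_one_of_one_le hb, eq_one_of_one_le ha⟩
  · rintro ⟨rfl, rfl⟩; exact mul_one 1

lemma inf_eq_one {a b : A} : a ⊓ b = 1 ↔ a = 1 ∧ b = 1 := by
  constructor
  · intro h
    exact ⟨eq_one_of_one_le (h ▸ inf_le_left), eq_one_of_one_le (h ▸ inf_le_right)⟩
  · rintro ⟨rfl, rfl⟩; exact inf_idem 1

lemma iInf_eq_one {ι : Sort*} (f : ι → A) : (⨅ i, f i) = 1 ↔ ∀ i, f i = 1 := by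
  rw [MTLChain.one_eq_top, iInf_eq_top]

lemma exists_eq_iSup {ι : Type*} [Nonempty ι] (f : ι → A) : ∃ i, f i = ⨆ j, f j := by
  have hfin : (Set.range f).Finite := (Set.range f).toFinite
  have hne : (Set.range f).Nonempty := Set.range_nonempty f
  have := hne.csSup_mem hfin
  rw [show sSup (Set.range f) = ⨆ j, f j from rfl] at this
  exact this

lemma exists_eq_iInf {ι : Type*} [Nonempty ι] (f : ι → A) : ∃ i, f i = ⨅ j, f j := by
  have hfin : (Set.range f).Finite := (Set.range f).toFinite
  have hne : (Set.range f).Nonempty := Set.range_nonempty f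
  have := hne.csInf_mem hfin
  rw [show sInf (Set.range f) = ⨅ j, f j from rfl] at this
  exact this

lemma iSup_eq_one {ι : Type*} [Nonempty ι] (f : ι → A) :
    (⨆ i, f i) = 1 ↔ ∃ i, f i = 1 := by
  constructor
  · intro h
    obtain ⟨i, hi⟩ := exists_eq_iSup f
    exact ⟨i, hi.trans h⟩
  · intro ⟨i, hi⟩
    exact eq_one_of_one_le (hi ▸ le_iSup f i)

lemma all_eq_one (htriv : (⊥ : A) = 1) (a : A) : a = 1 :=
  le_antisymm (le_one a) (htriv ▸ bot_le)

end PPTfae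
namespace PPTfae
variable {A : Type u} [MTLChain A] {L : Lang.{u}}

/-- Terms commute with homomorphisms. -/
lemma term_hom {M N : Structure L A} {g : M.Dom → N.Dom} (hg : IsHom M N g)
    (t : Term L) (v : ℕ → M.Dom) : t.val N (g ∘ v) = g (t.val M v) := by
  induction t with
  | var n => rfl
  | func f ts ih =>
      show N.funMap f (fun i => (ts i).val N (g ∘ v)) = g (M.funMap f (fun i => (ts i).val M v))
      rw [hg.map_fun]
      congr 1
      funext i
      exact ih i

/-- Term values only depend on the free variables. -/
lemma term_fvars_congr {M : Structure L A} (t : Term L) {v w : ℕ → M.Dom}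
    (h : ∀ n ∈ t.fvars, v n = w n) : t.val M v = t.val M w := by
  induction t with
  | var n => exact h n (by simp [Term.fvars])
  | func f ts ih =>
      show M.funMap f _ = M.funMap f _
      congr 1
      funext i
      exact ih i (fun n hn => h n (by simp only [Term.fvars, Set.mem_iUnion]; exact ⟨i, hn⟩))

/-- Formula values only depend on the free variables. -/
lemma val_fvars_congr {M : Structure L A} (φ : Formula L) : ∀ {v w : ℕ → M.Dom},
    (∀ n ∈ φ.fvars, v n = w n) → φ.val M v = φ.val M w := by
  induction φ with
  | rel P ts =>
      intro v w h
      show M.relMap P _ = M.relMap P _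
      congr 1
      funext i
      exact term_fvars_congr (ts i)
        (fun n hn => h n (by simp only [Formula.fvars, Set.mem_iUnion]; exact ⟨i, hn⟩))
  | eq t₁ t₂ =>
      intro v w h
      show (if _ then _ else _) = (if _ then _ else _)
      rw [term_fvars_congr t₁ (fun n hn => h n (Or.inl hn)),
        term_fvars_congr t₂ (fun n hn => h n (Or.inr hn))]
  | sconj φ ψ ihφ ihψ =>
      intro v w h
      show _ * _ = _ * _
      rw [ihφ (fun n hn => h n (Or.inl hn)), ihψ (fun n hn => h n (Or.inr hn))]
  | wconj φ ψ ihφ ihψ =>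
      intro v w h
      show _ ⊓ _ = _ ⊓ _
      rw [ihφ (fun n hn => h n (Or.inl hn)), ihψ (fun n hn => h n (Or.inr hn))]
  | wdisj φ ψ ihφ ihψ =>
      intro v w h
      show _ ⊔ _ = _ ⊔ _
      rw [ihφ (fun n hn => h n (Or.inl hn)), ihψ (fun n hn => h n (Or.inr hn))]
  | impl φ ψ ihφ ihψ =>
      intro v w h
      show MTLChain.resid _ _ = MTLChain.resid _ _
      rw [ihφ (fun n hn => h n (Or.inl hn)), ihψ (fun n hn => h n (Or.inr hn))]
  | all x φ ih =>
      intro v w h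
      show (⨅ a, _) = (⨅ a, _)
      congr 1
      funext a
      refine ih (fun n hn => ?_)
      by_cases hx : n = x
      · subst hx; simp [Function.update_self]
      · rw [Function.update_of_ne hx, Function.update_of_ne hx]
        exact h n ⟨hn, hx⟩
  | ex x φ ih =>
      intro v w h
      show (⨆ a, _) = (⨆ a, _)
      congr 1
      funext a
      refine ih (fun n hn => ?_)
      by_cases hx : n = x
      · subst hx; simp [Function.update_self]
      · rw [Function.update_of_ne hx, Function.update_of_ne hx]
        exact h n ⟨hn, hx⟩

/-- A sentence has a constant value. -/
lemma sentence_val_congr {M : Structure L A} {φ : Formula L} (h : φ.IsSentence)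
    (v w : ℕ → M.Dom) : φ.val M v = φ.val M w :=
  val_fvars_congr φ (fun n hn => by rw [Formula.IsSentence] at h; rw [h] at hn; exact hn.elim)

lemma valid_of_val_one {M : Structure L A} {φ : Formula L} (h : φ.IsSentence)
    (v : ℕ → M.Dom) (hv : φ.val M v = 1) : Valid M φ :=
  fun w => (sentence_val_congr h w v).trans hv

end PPTfae
namespace PPTfae
variable {A : Type u} [MTLChain A] {L : Lang.{u}}

lemma comp_update {M N : Structure L A} (g : M.Dom → N.Dom) (v : ℕ → M.Dom) (x : ℕ)
    (a : M.Dom) : g ∘ Function.update v x a = Function.update (g ∘ v) x (g a) := by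
  funext n
  by_cases hx : n = x
  · subst hx; simp
  · simp [Function.comp, Function.update_of_ne hx]

/-- Homomorphisms preserve truth of quantifier-free positive formulas. -/
lemma qfconj_hom {M N : Structure L A} {g : M.Dom → N.Dom} (hg : IsHom M N g)
    {φ : Formula L} (hφ : QFConj φ) (v : ℕ → M.Dom) (h1 : φ.val M v = 1) :
    φ.val N (g ∘ v) = 1 := by
  induction hφ with
  | atom ha =>
      cases ha with
      | rel P ts =>
          have : M.relMap P (fun i => (ts i).val M v) = 1 := h1
          have h2 := hg.map_rel P _ this
          show N.relMap P (fun i => (ts i).val N (g ∘ v)) = 1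
          have : (fun i => (ts i).val N (g ∘ v)) = g ∘ (fun i => (ts i).val M v) := by
            funext i; exact term_hom hg (ts i) v
          rw [this]; exact h2
      | eq t₁ t₂ =>
          show (if t₁.val N (g ∘ v) = t₂.val N (g ∘ v) then (1:A) else ⊥) = 1
          by_cases htriv : (⊥ : A) = 1
          · exact all_eq_one htriv _
          · have h1' : (if t₁.val M v = t₂.val M v then (1:A) else ⊥) = 1 := h1
            by_cases he : t₁.val M v = t₂.val M v
            · rw [term_hom hg t₁ v, term_hom hg t₂ v, he, if_pos rfl]
            · rw [if_neg he] at h1'; exact absurd h1' htriv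
  | sconj hφ hψ ihφ ihψ =>
      have := mul_eq_one.1 h1
      show _ * _ = 1
      exact mul_eq_one.2 ⟨ihφ this.1, ihψ this.2⟩
  | wconj hφ hψ ihφ ihψ =>
      have := inf_eq_one.1 h1
      show _ ⊓ _ = 1
      exact inf_eq_one.2 ⟨ihφ this.1, ihψ this.2⟩

lemma pp_hom {M N : Structure L A} {g : M.Dom → N.Dom} (hg : IsHom M N g)
    {φ : Formula L} (hφ : IsPP φ) : ∀ (v : ℕ → M.Dom), φ.val M v = 1 →
    φ.val N (g ∘ v) = 1 := by
  induction hφ with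
  | base hq => exact fun v h1 => qfconj_hom hg hq v h1
  | ex x hφ ih =>
      intro v h1
      rw [show Formula.val M (.ex x _) v = ⨆ a : M.Dom, Formula.val M _ (Function.update v x a) from rfl] at h1
      obtain ⟨a, ha⟩ := (iSup_eq_one _).1 h1
      show (⨆ b : N.Dom, _) = 1
      refine (iSup_eq_one _).2 ⟨g a, ?_⟩
      have := ih (Function.update v x a) ha
      rwa [comp_update] at this

/-- Homomorphisms preserve validity of pp sentences. -/
lemma pp_hom_valid {M N : Structure L A} {g : M.Dom → N.Dom} (hg : IsHom M N g)
    {φ : Formula L} (hφ : IsPP φ) (hs : φ.IsSentence) (h : Valid M φ) : Valid N φ := by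
  have v₀ : ℕ → M.Dom := fun _ => Classical.arbitrary _
  exact valid_of_val_one hs (g ∘ v₀) (pp_hom hg hφ v₀ (h v₀))

lemma wprim_pp {φ : Formula L} (h : IsWPrimitive φ) : IsPP φ := by
  induction h with
  | base hq =>
      refine IsPP.base ?_
      induction hq with
      | atom ha => exact QFConj.atom ha
      | wconj _ _ ih₁ ih₂ => exact QFConj.wconj ih₁ ih₂
  | ex x _ ih => exact IsPP.ex x ih

lemma sprim_pp {φ : Formula L} (h : IsSPrimitive φ) : IsPP φ := by
  induction h with
  | base hq =>
      refine IsPP.base ?_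
      induction hq with
      | atom ha => exact QFConj.atom ha
      | sconj _ _ ih₁ ih₂ => exact QFConj.sconj ih₁ ih₂
  | ex x _ ih => exact IsPP.ex x ih

end PPTfae
namespace PPTfae
variable {A : Type u} [MTLChain A] {L : Lang.{u}}

section WeakProd
variable {I : Type u} [Nonempty I] {Ms : I → Structure L A} (W : WeakProdData Ms)

/-- Coordinates of term values in a weak product. -/
lemma wp_term (t : Term L) (v : ℕ → W.toStructure.Dom) (i : I) :
    (t.val W.toStructure v) i = t.val (Ms i) (fun n => v n i) := by
  induction t with
  | var n => rfl
  | func f ts ih =>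
      show (Ms i).funMap f _ = (Ms i).funMap f _
      congr 1
      funext k
      exact ih k

lemma wp_qfconj {φ : Formula L} (hφ : QFConj φ) (v : ℕ → W.toStructure.Dom) :
    φ.val W.toStructure v = 1 ↔ ∀ i, φ.val (Ms i) (fun n => v n i) = 1 := by
  induction hφ with
  | atom ha =>
      cases ha with
      | rel P ts =>
          show W.relMap P _ = 1 ↔ _
          refine (W.rel_one_iff P _).trans ?_
          constructor
          · intro h i
            have := h i
            show (Ms i).relMap P (fun k => (ts k).val (Ms i) (fun n => v n i)) = 1
            have he : (fun k => (ts k).val (Ms i) fun n => v n i)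
                = (fun k => ((ts k).val W.toStructure v) i) := by
              funext k; exact (wp_term W (ts k) v i).symm
            rw [he]; exact this
          · intro h i
            have := h i
            show (Ms i).relMap P (fun k => ((ts k).val W.toStructure v) i) = 1
            have he : (fun k => ((ts k).val W.toStructure v) i)
                = (fun k => (ts k).val (Ms i) fun n => v n i) := by
              funext k; exact wp_term W (ts k) v i
            rw [he]; exact this
      | eq t₁ t₂ =>
          simp only [Formula.val]
          by_cases htriv : (⊥ : A) = 1
          · constructor
            · intro _ i; exact all_eq_one htriv _
            · intro _; exact all_eq_one htriv _
          · constructor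
            · intro h i
              by_cases he : t₁.val W.toStructure v = t₂.val W.toStructure v
              · rw [if_pos (by rw [← wp_term W t₁ v i, ← wp_term W t₂ v i, he])]
              · rw [if_neg he] at h; exact absurd h htriv
            · intro h
              rw [if_pos]
              funext i
              have := h i
              by_cases he : t₁.val (Ms i) (fun n => v n i) = t₂.val (Ms i) (fun n => v n i)
              · rw [wp_term W t₁ v i, wp_term W t₂ v i, he]
              · rw [if_neg he] at this; exact absurd this htriv
  | sconj hφ hψ ihφ ihψ =>
      show _ * _ = 1 ↔ _
      rw [mul_eq_one, ihφ, ihψ]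
      constructor
      · intro ⟨h1, h2⟩ i; exact mul_eq_one.2 ⟨h1 i, h2 i⟩
      · intro h
        exact ⟨fun i => (mul_eq_one.1 (h i)).1, fun i => (mul_eq_one.1 (h i)).2⟩
  | wconj hφ hψ ihφ ihψ =>
      show _ ⊓ _ = 1 ↔ _
      rw [inf_eq_one, ihφ, ihψ]
      constructor
      · intro ⟨h1, h2⟩ i; exact inf_eq_one.2 ⟨h1 i, h2 i⟩
      · intro h
        exact ⟨fun i => (inf_eq_one.1 (h i)).1, fun i => (inf_eq_one.1 (h i)).2⟩

lemma wp_pp {φ : Formula L} (hφ : IsPP φ) : ∀ (v : ℕ → W.toStructure.Dom),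
    (∀ i, φ.val (Ms i) (fun n => v n i) = 1) → φ.val W.toStructure v = 1 := by
  induction hφ with
  | base hq => exact fun v h => (wp_qfconj W hq v).2 h
  | @ex φ x hφ ih =>
      intro v h
      choose a ha using fun i => (iSup_eq_one
        (fun b => φ.val (Ms i) (Function.update (fun n => v n i) x b))).1 (h i)
      show (⨆ b : W.toStructure.Dom, _) = 1
      refine (iSup_eq_one _).2 ⟨a, ih (Function.update v x a) (fun i => ?_)⟩
      have : (fun n => Function.update v x a n i)
          = Function.update (fun n => v n i) x (a i) := by
        funext n
        by_cases hx : n = x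
        · subst hx; exact (congrFun (Function.update_self (β := fun _ => ∀ i, (Ms i).Dom) n a v) i).trans
            (Function.update_self n (a i) (fun n => v n i)).symm
        · exact (congrFun (Function.update_of_ne (β := fun _ => ∀ i, (Ms i).Dom) hx a v) i).trans
            (Function.update_of_ne hx (a i) (fun n => v n i)).symm
      rw [this]
      exact ha i

end WeakProd

/-- The canonical weak-product data of the direct product. -/
def dirW {I : Type u} [Nonempty I] (Ms : I → Structure L A) : WeakProdData Ms where
  relMap P d := ⨅ i, (Ms i).relMap P fun k => d k i
  rel_one_iff P d := iInf_eq_one _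

lemma dirProd_eq_toStructure {I : Type u} [Nonempty I] (Ms : I → Structure L A) :
    dirProd Ms = (dirW Ms).toStructure := rfl

/-- Projections from the direct product are homomorphisms. -/
lemma proj_hom {I : Type u} [Nonempty I] (Ms : I → Structure L A) (j : I) :
    IsHom (dirProd Ms) (Ms j) (fun d => d j) where
  map_fun f d := rfl
  map_rel P d h := by
    have := (iInf_eq_one (fun i => (Ms i).relMap P fun k => d k i)).1 h
    exact this j

end PPTfae
namespace PPTfae
variable {A : Type u} [MTLChain A] {L : Lang.{u}}

/-- Replace every strong conjunction by a weak conjunction. -/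
def swapW : Formula L → Formula L
  | .rel P ts => .rel P ts
  | .eq t₁ t₂ => .eq t₁ t₂
  | .sconj φ ψ => .wconj (swapW φ) (swapW ψ)
  | .wconj φ ψ => .wconj (swapW φ) (swapW ψ)
  | .wdisj φ ψ => .wdisj (swapW φ) (swapW ψ)
  | .impl φ ψ => .impl (swapW φ) (swapW ψ)
  | .all x φ => .all x (swapW φ)
  | .ex x φ => .ex x (swapW φ)

/-- Replace every weak conjunction by a strong conjunction. -/
def swapS : Formula L → Formula L
  | .rel P ts => .rel P ts
  | .eq t₁ t₂ => .eq t₁ t₂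
  | .sconj φ ψ => .sconj (swapS φ) (swapS ψ)
  | .wconj φ ψ => .sconj (swapS φ) (swapS ψ)
  | .wdisj φ ψ => .wdisj (swapS φ) (swapS ψ)
  | .impl φ ψ => .impl (swapS φ) (swapS ψ)
  | .all x φ => .all x (swapS φ)
  | .ex x φ => .ex x (swapS φ)

lemma swapW_fvars (φ : Formula L) : (swapW φ).fvars = φ.fvars := by
  induction φ with
  | rel P ts => rfl
  | eq t₁ t₂ => rfl
  | sconj φ ψ ih₁ ih₂ => show _ ∪ _ = _ ∪ _; rw [ih₁, ih₂]
  | wconj φ ψ ih₁ ih₂ => show _ ∪ _ = _ ∪ _; rw [ih₁, ih₂]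
  | wdisj φ ψ ih₁ ih₂ => show _ ∪ _ = _ ∪ _; rw [ih₁, ih₂]
  | impl φ ψ ih₁ ih₂ => show _ ∪ _ = _ ∪ _; rw [ih₁, ih₂]
  | all x φ ih => show _ \ _ = _ \ _; rw [ih]
  | ex x φ ih => show _ \ _ = _ \ _; rw [ih]

lemma swapS_fvars (φ : Formula L) : (swapS φ).fvars = φ.fvars := by
  induction φ with
  | rel P ts => rfl
  | eq t₁ t₂ => rfl
  | sconj φ ψ ih₁ ih₂ => show _ ∪ _ = _ ∪ _; rw [ih₁, ih₂]
  | wconj φ ψ ih₁ ih₂ => show _ ∪ _ = _ ∪ _; rw [ih₁, ih₂]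
  | wdisj φ ψ ih₁ ih₂ => show _ ∪ _ = _ ∪ _; rw [ih₁, ih₂]
  | impl φ ψ ih₁ ih₂ => show _ ∪ _ = _ ∪ _; rw [ih₁, ih₂]
  | all x φ ih => show _ \ _ = _ \ _; rw [ih]
  | ex x φ ih => show _ \ _ = _ \ _; rw [ih]

lemma swapW_qf {φ : Formula L} (h : QFConj φ) : QFWConj (swapW φ) := by
  induction h with
  | atom ha => cases ha with
      | rel P ts => exact QFWConj.atom (IsAtomicFormula.rel P ts)
      | eq t₁ t₂ => exact QFWConj.atom (IsAtomicFormula.eq t₁ t₂)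
  | sconj _ _ ih₁ ih₂ => exact QFWConj.wconj ih₁ ih₂
  | wconj _ _ ih₁ ih₂ => exact QFWConj.wconj ih₁ ih₂

lemma swapS_qf {φ : Formula L} (h : QFConj φ) : QFSConj (swapS φ) := by
  induction h with
  | atom ha => cases ha with
      | rel P ts => exact QFSConj.atom (IsAtomicFormula.rel P ts)
      | eq t₁ t₂ => exact QFSConj.atom (IsAtomicFormula.eq t₁ t₂)
  | sconj _ _ ih₁ ih₂ => exact QFSConj.sconj ih₁ ih₂
  | wconj _ _ ih₁ ih₂ => exact QFSConj.sconj ih₁ ih₂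

lemma swapW_pp {φ : Formula L} (h : IsPP φ) : IsWPrimitive (swapW φ) := by
  induction h with
  | base hq => exact IsWPrimitive.base (swapW_qf hq)
  | ex x _ ih => exact IsWPrimitive.ex x ih

lemma swapS_pp {φ : Formula L} (h : IsPP φ) : IsSPrimitive (swapS φ) := by
  induction h with
  | base hq => exact IsSPrimitive.base (swapS_qf hq)
  | ex x _ ih => exact IsSPrimitive.ex x ih

lemma swapW_qf_val {M : Structure L A} {φ : Formula L} (h : QFConj φ) (v : ℕ → M.Dom) :
    ((swapW φ).val M v = 1 ↔ φ.val M v = 1) ∧ ((swapS φ).val M v = 1 ↔ φ.val M v = 1) := by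
  induction h with
  | atom ha => cases ha with
      | rel P ts => exact ⟨Iff.rfl, Iff.rfl⟩
      | eq t₁ t₂ => exact ⟨Iff.rfl, Iff.rfl⟩
  | sconj _ _ ih₁ ih₂ =>
      constructor
      · show _ ⊓ _ = 1 ↔ _ * _ = 1
        rw [inf_eq_one, mul_eq_one, ih₁.1, ih₂.1]
      · show _ * _ = 1 ↔ _ * _ = 1
        rw [mul_eq_one, mul_eq_one, ih₁.2, ih₂.2]
  | wconj _ _ ih₁ ih₂ =>
      constructor
      · show _ ⊓ _ = 1 ↔ _ ⊓ _ = 1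
        rw [inf_eq_one, inf_eq_one, ih₁.1, ih₂.1]
      · show _ * _ = 1 ↔ _ ⊓ _ = 1
        rw [mul_eq_one, inf_eq_one, ih₁.2, ih₂.2]

lemma swapW_pp_val {M : Structure L A} {φ : Formula L} (h : IsPP φ) : ∀ (v : ℕ → M.Dom),
    ((swapW φ).val M v = 1 ↔ φ.val M v = 1) ∧ ((swapS φ).val M v = 1 ↔ φ.val M v = 1) := by
  induction h with
  | base hq => exact fun v => swapW_qf_val hq v
  | @ex φ x hφ ih =>
      intro v
      constructor
      · show (⨆ a : M.Dom, (swapW φ).val M (Function.update v x a)) = 1 ↔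
          (⨆ a : M.Dom, φ.val M (Function.update v x a)) = 1
        rw [iSup_eq_one, iSup_eq_one]
        exact exists_congr (fun a => (ih _).1)
      · show (⨆ a : M.Dom, (swapS φ).val M (Function.update v x a)) = 1 ↔
          (⨆ a : M.Dom, φ.val M (Function.update v x a)) = 1
        rw [iSup_eq_one, iSup_eq_one]
        exact exists_congr (fun a => (ih _).2)

lemma swapW_valid {M : Structure L A} {φ : Formula L} (h : IsPP φ) :
    (Valid M (swapW φ) ↔ Valid M φ) ∧ (Valid M (swapS φ) ↔ Valid M φ) :=
  ⟨forall_congr' (fun v => (swapW_pp_val h v).1), forall_congr' (fun v => (swapW_pp_val h v).2)⟩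

end PPTfae
namespace PPTfae
variable {A : Type u} [MTLChain A] {L : Lang.{u}}

section Ultra
variable {I : Type u} (U : Ultrafilter I)

lemma limU_exists (f : I → A) : ∃ a : A, {i | f i = a} ∈ U := by
  by_contra h
  push_neg at h
  have hc : ∀ a : A, {i | f i = a}ᶜ ∈ U := fun a => Ultrafilter.compl_mem_iff_notMem.2 (h a)
  have hall : {i | ∀ a : A, f i ≠ a} ∈ U := by
    have : (⋂ a : A, {i | f i = a}ᶜ) ∈ U := (Filter.iInter_mem).2 hc
    refine Filter.mem_of_superset this ?_
    intro i hi a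
    exact Set.mem_iInter.1 hi a
  have : (∅ : Set I) ∈ (U : Filter I) := by
    refine Filter.mem_of_superset hall ?_
    intro i hi
    exact absurd rfl (hi (f i))
  exact Filter.empty_notMem (U : Filter I) this

/-- The ultrafilter limit of an `A`-valued function. -/
noncomputable def limU (f : I → A) : A := Classical.choose (limU_exists U f)

lemma limU_spec (f : I → A) : {i | f i = limU U f} ∈ U := Classical.choose_spec (limU_exists U f)

lemma limU_eq {f : I → A} {a : A} (h : {i | f i = a} ∈ U) : limU U f = a := by
  have h2 := limU_spec U f
  have : ({i | f i = a} ∩ {i | f i = limU U f}) ∈ U := Filter.inter_mem h h2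
  obtain ⟨i, hi1, hi2⟩ := Filter.nonempty_of_mem this
  rw [← hi2, hi1]

lemma limU_const (a : A) : limU U (fun _ => a) = a :=
  limU_eq U (Filter.univ_mem' (fun _ => rfl))

lemma limU_congr {f g : I → A} (h : {i | f i = g i} ∈ U) : limU U f = limU U g := by
  refine limU_eq U ?_
  refine Filter.mem_of_superset (Filter.inter_mem h (limU_spec U g)) ?_
  rintro i ⟨h1, h2⟩
  exact h1.trans h2

lemma limU_op (op : A → A → A) (f g : I → A) :
    limU U (fun i => op (f i) (g i)) = op (limU U f) (limU U g) := by
  refine limU_eq U ?_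
  refine Filter.mem_of_superset (Filter.inter_mem (limU_spec U f) (limU_spec U g)) ?_
  rintro i ⟨h1, h2⟩
  show op (f i) (g i) = _
  rw [h1, h2]

lemma limU_mono {f g : I → A} (h : ∀ i, f i ≤ g i) : limU U f ≤ limU U g := by
  obtain ⟨i, hi1, hi2⟩ := Filter.nonempty_of_mem
    (Filter.inter_mem (limU_spec U f) (limU_spec U g))
  rw [← hi1, ← hi2]
  exact h i

variable (N : Structure L A)

/-- The almost-everywhere-equality setoid. -/
def aeSetoid : Setoid (I → N.Dom) where
  r f g := {i | f i = g i} ∈ U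
  iseqv := by
    refine ⟨fun f => ?_, fun h => ?_, fun h1 h2 => ?_⟩
    · exact Filter.univ_mem' (fun _ => rfl)
    · simpa [eq_comm] using h
    · refine Filter.mem_of_superset (Filter.inter_mem h1 h2) ?_
      rintro i ⟨ha, hb⟩
      exact ha.trans hb

/-- The ultrapower structure. -/
noncomputable def upow : Structure L A where
  Dom := Quotient (aeSetoid U N)
  dom_nonempty := ⟨Quotient.mk _ (fun _ => Classical.arbitrary _)⟩
  funMap f d := Quotient.mk _ (fun i => N.funMap f (fun k => (d k).out i))
  relMap P d := limU U (fun i => N.relMap P (fun k => (d k).out i))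

lemma upow_mk_eq {f g : I → N.Dom} :
    (Quotient.mk (aeSetoid U N) f = Quotient.mk (aeSetoid U N) g) ↔ {i | f i = g i} ∈ U :=
  ⟨fun h => Quotient.exact h, fun h => Quotient.sound h⟩

lemma upow_reps {m : ℕ} (d : Fin m → (upow U N).Dom) (e : Fin m → (I → N.Dom))
    (he : ∀ k, Quotient.mk (aeSetoid U N) (e k) = d k) :
    {i | ∀ k, (d k).out i = e k i} ∈ U := by
  have : ∀ k, {i | (d k).out i = e k i} ∈ U := by
    intro k
    have : Quotient.mk (aeSetoid U N) (d k).out = Quotient.mk (aeSetoid U N) (e k) := by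
      exact (Quotient.out_eq (s := aeSetoid U N) (d k)).trans (he k).symm
    exact (upow_mk_eq U N).1 this
  have h2 : (⋂ k, {i | (d k).out i = e k i}) ∈ U := (Filter.iInter_mem).2 this
  refine Filter.mem_of_superset h2 ?_
  intro i hi k
  exact Set.mem_iInter.1 hi k

lemma upow_funMap (f : L.Func) (d : Fin (L.funcAr f) → (upow U N).Dom)
    (e : Fin (L.funcAr f) → (I → N.Dom))
    (he : ∀ k, Quotient.mk (aeSetoid U N) (e k) = d k) :
    (upow U N).funMap f d = Quotient.mk _ (fun i => N.funMap f (fun k => e k i)) := by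
  refine Quotient.sound ?_
  refine Filter.mem_of_superset (upow_reps U N d e he) ?_
  intro i hi
  show N.funMap f _ = N.funMap f _
  congr 1
  funext k
  exact hi k

lemma upow_relMap (P : L.Pred) (d : Fin (L.predAr P) → (upow U N).Dom)
    (e : Fin (L.predAr P) → (I → N.Dom))
    (he : ∀ k, Quotient.mk (aeSetoid U N) (e k) = d k) :
    (upow U N).relMap P d = limU U (fun i => N.relMap P (fun k => e k i)) := by
  refine limU_congr U ?_
  refine Filter.mem_of_superset (upow_reps U N d e he) ?_
  intro i hi
  show N.relMap P _ = N.relMap P _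
  congr 1
  funext k
  exact hi k

lemma upow_term (t : Term L) (v : ℕ → (I → N.Dom)) :
    t.val (upow U N) (fun n => Quotient.mk _ (v n))
      = Quotient.mk _ (fun i => t.val N (fun n => v n i)) := by
  induction t with
  | var n => rfl
  | func f ts ih =>
      show (upow U N).funMap f _ = _
      rw [upow_funMap U N f _ (fun k => fun i => (ts k).val N (fun n => v n i))
        (fun k => (ih k).symm)]
      rfl

lemma mk_update (v : ℕ → (I → N.Dom)) (x : ℕ) (u : I → N.Dom) :
    Function.update (fun n => Quotient.mk (aeSetoid U N) (v n)) x (Quotient.mk _ u)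
      = fun n => Quotient.mk _ (Function.update v x u n) := by
  funext n
  by_cases hx : n = x
  · subst hx; simp
  · rw [Function.update_of_ne hx, Function.update_of_ne hx]

lemma update_coord (v : ℕ → (I → N.Dom)) (x : ℕ) (u : I → N.Dom) (i : I) :
    (fun n => Function.update v x u n i) = Function.update (fun n => v n i) x (u i) := by
  funext n
  by_cases hx : n = x
  · subst hx; simp
  · rw [Function.update_of_ne hx, Function.update_of_ne hx]

/-- Łoś's theorem for the ultrapower. -/
lemma upow_los (φ : Formula L) : ∀ (v : ℕ → (I → N.Dom)),
    φ.val (upow U N) (fun n => Quotient.mk _ (v n))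
      = limU U (fun i => φ.val N (fun n => v n i)) := by
  induction φ with
  | rel P ts =>
      intro v
      show (upow U N).relMap P _ = _
      rw [upow_relMap U N P _ (fun k => fun i => (ts k).val N (fun n => v n i))
        (fun k => (upow_term U N (ts k) v).symm)]
      rfl
  | eq t₁ t₂ =>
      intro v
      show (if t₁.val (upow U N) _ = t₂.val (upow U N) _ then (1:A) else ⊥) = _
      rw [upow_term U N t₁ v, upow_term U N t₂ v]
      by_cases h : Quotient.mk (aeSetoid U N) (fun i => t₁.val N (fun n => v n i))
          = Quotient.mk (aeSetoid U N) (fun i => t₂.val N (fun n => v n i))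
      · refine (if_pos h).trans ?_
        refine (limU_eq U ?_).symm
        refine Filter.mem_of_superset ((upow_mk_eq U N).1 h) ?_
        intro i hi
        show Formula.val N (.eq t₁ t₂) (fun n => v n i) = 1
        have hi' : t₁.val N (fun n => v n i) = t₂.val N (fun n => v n i) := hi
        show (if t₁.val N (fun n => v n i) = t₂.val N (fun n => v n i) then (1:A) else ⊥) = 1
        rw [if_pos hi']
      · refine (if_neg h).trans ?_
        refine (limU_eq U ?_).symm
        have : {i | t₁.val N (fun n => v n i) = t₂.val N (fun n => v n i)} ∉ U :=
          fun hh => h ((upow_mk_eq U N).2 hh)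
        have hc := (Ultrafilter.compl_mem_iff_notMem (f := U)).2 this
        refine Filter.mem_of_superset hc ?_
        intro i hi
        show Formula.val N (.eq t₁ t₂) (fun n => v n i) = ⊥
        have hi' : ¬ t₁.val N (fun n => v n i) = t₂.val N (fun n => v n i) := hi
        show (if t₁.val N (fun n => v n i) = t₂.val N (fun n => v n i) then (1:A) else ⊥) = ⊥
        rw [if_neg hi']
  | sconj φ ψ ihφ ihψ =>
      intro v
      show _ * _ = _
      rw [ihφ v, ihψ v, ← limU_op U (· * ·)]
      rfl
  | wconj φ ψ ihφ ihψ =>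
      intro v
      show _ ⊓ _ = _
      rw [ihφ v, ihψ v, ← limU_op U (· ⊓ ·)]
      rfl
  | wdisj φ ψ ihφ ihψ =>
      intro v
      show _ ⊔ _ = _
      rw [ihφ v, ihψ v, ← limU_op U (· ⊔ ·)]
      rfl
  | impl φ ψ ihφ ihψ =>
      intro v
      show MTLChain.resid _ _ = _
      rw [ihφ v, ihψ v, ← limU_op U MTLChain.resid]
      rfl
  | all x φ ih =>
      intro v
      show (⨅ a : (upow U N).Dom, φ.val (upow U N) (Function.update _ x a)) = _
      have key : ∀ u : I → N.Dom,
          φ.val (upow U N) (Function.update (fun n => Quotient.mk _ (v n)) x (Quotient.mk _ u))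
            = limU U (fun i => φ.val N (Function.update (fun n => v n i) x (u i))) := by
        intro u
        refine (congrArg (φ.val (upow U N)) (mk_update U N v x u)).trans
          ((ih (Function.update v x u)).trans ?_)
        refine limU_congr U ?_
        refine Filter.univ_mem' ?_
        intro i
        show φ.val N _ = φ.val N _
        rw [update_coord N v x u i]
      refine le_antisymm ?_ ?_
      · choose b hb using fun i => exists_eq_iInf
          (fun a : N.Dom => φ.val N (Function.update (fun n => v n i) x a))
        have : φ.val (upow U N)
            (Function.update (fun n => Quotient.mk _ (v n)) x (Quotient.mk _ b))
              = limU U (fun i => ⨅ a : N.Dom, φ.val N (Function.update (fun n => v n i) x a)) := by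
          rw [key b]
          exact limU_congr U (Filter.univ_mem' (fun i => hb i))
        exact this ▸ iInf_le _ (Quotient.mk _ b)
      · refine le_iInf ?_
        intro a
        have ha : Quotient.mk (aeSetoid U N) a.out = a := Quotient.out_eq a
        rw [← ha, key a.out]
        refine limU_mono U ?_
        intro i
        exact iInf_le _ (a.out i)
  | ex x φ ih =>
      intro v
      show (⨆ a : (upow U N).Dom, φ.val (upow U N) (Function.update _ x a)) = _
      have key : ∀ u : I → N.Dom,
          φ.val (upow U N) (Function.update (fun n => Quotient.mk _ (v n)) x (Quotient.mk _ u))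
            = limU U (fun i => φ.val N (Function.update (fun n => v n i) x (u i))) := by
        intro u
        refine (congrArg (φ.val (upow U N)) (mk_update U N v x u)).trans
          ((ih (Function.update v x u)).trans ?_)
        refine limU_congr U ?_
        refine Filter.univ_mem' ?_
        intro i
        show φ.val N _ = φ.val N _
        rw [update_coord N v x u i]
      refine le_antisymm ?_ ?_
      · refine iSup_le ?_
        intro a
        have ha : Quotient.mk (aeSetoid U N) a.out = a := Quotient.out_eq a
        rw [← ha, key a.out]
        refine limU_mono U ?_
        intro i
        exact le_iSup (fun b : N.Dom => φ.val N (Function.update (fun n => v n i) x b)) (a.out i)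
      · choose b hb using fun i => exists_eq_iSup
          (fun a : N.Dom => φ.val N (Function.update (fun n => v n i) x a))
        have : φ.val (upow U N)
            (Function.update (fun n => Quotient.mk _ (v n)) x (Quotient.mk _ b))
              = limU U (fun i => ⨆ a : N.Dom, φ.val N (Function.update (fun n => v n i) x a)) := by
          rw [key b]
          exact limU_congr U (Filter.univ_mem' (fun i => hb i))
        exact this ▸ le_iSup (fun a : (upow U N).Dom =>
          φ.val (upow U N) (Function.update (fun n => Quotient.mk _ (v n)) x a)) (Quotient.mk _ b)

/-- Validity transfers between a structure and its ultrapower. -/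
lemma upow_valid (φ : Formula L) : Valid (upow U N) φ ↔ Valid N φ := by
  constructor
  · intro h w
    have := h (fun n => Quotient.mk _ (fun _ => w n))
    rw [upow_los U N φ (fun n => fun _ => w n)] at this
    have h2 : limU U (fun _ => φ.val N w) = φ.val N w := limU_const U _
    rw [← h2, this]
  · intro h w
    have hw : (fun n => Quotient.mk (aeSetoid U N) (w n).out) = w := by
      funext n; exact Quotient.out_eq (w n)
    rw [← hw, upow_los U N φ (fun n => (w n).out)]
    refine limU_eq U (Filter.univ_mem' ?_)
    intro i
    exact h _
end Ultra

end PPTfae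
namespace PPTfae
variable {A : Type u} [MTLChain A] {L : Lang.{u}}

/-- Finite weak conjunction of a list of formulas. -/
def conjList (l : List (Formula L)) : Formula L :=
  l.foldr .wconj (.eq (.var 0) (.var 0))

lemma conjList_qf {l : List (Formula L)} (h : ∀ φ ∈ l, QFWConj φ) : QFWConj (conjList l) := by
  induction l with
  | nil => exact QFWConj.atom (IsAtomicFormula.eq _ _)
  | cons φ l ih =>
      exact QFWConj.wconj (h φ (List.mem_cons_self))
        (ih (fun ψ hψ => h ψ (List.mem_cons_of_mem φ hψ)))

lemma conjList_val {M : Structure L A} (l : List (Formula L)) (v : ℕ → M.Dom) :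
    (conjList l).val M v = 1 ↔ ∀ φ ∈ l, φ.val M v = 1 := by
  induction l with
  | nil =>
      simp only [conjList, List.foldr_nil, List.not_mem_nil, false_implies, implies_true,
        iff_true]
      show (if v 0 = v 0 then (1:A) else ⊥) = 1
      rw [if_pos rfl]
  | cons φ l ih =>
      show (φ.val M v ⊓ (conjList l).val M v) = 1 ↔ _
      rw [inf_eq_one, ih]
      constructor
      · rintro ⟨h1, h2⟩ ψ hψ
        rcases List.mem_cons.1 hψ with h | h
        · subst h; exact h1
        · exact h2 ψ h
      · intro h
        exact ⟨h φ (List.mem_cons_self), fun ψ hψ => h ψ (List.mem_cons_of_mem φ hψ)⟩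

lemma conjList_fvars {l : List (Formula L)} {S : Set ℕ} (h0 : 0 ∈ S)
    (h : ∀ φ ∈ l, φ.fvars ⊆ S) : (conjList l).fvars ⊆ S := by
  induction l with
  | nil =>
      show ((Term.var 0 : Term L).fvars ∪ (Term.var 0 : Term L).fvars) ⊆ S
      show (({0} : Set ℕ) ∪ {0}) ⊆ S
      simp [h0]
  | cons φ l ih =>
      show (φ.fvars ∪ (conjList l).fvars) ⊆ S
      exact Set.union_subset (h φ (List.mem_cons_self))
        (ih (fun ψ hψ => h ψ (List.mem_cons_of_mem φ hψ)))

/-- Existential closure of the variables `0, …, k-1`. -/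
def exCl : ℕ → Formula L → Formula L
  | 0, φ => φ
  | (k+1), φ => exCl k (.ex k φ)

lemma exCl_wprim : ∀ (k : ℕ) {φ : Formula L}, IsWPrimitive φ → IsWPrimitive (exCl k φ)
  | 0, φ, h => h
  | (k+1), φ, h => exCl_wprim k (IsWPrimitive.ex k h)

lemma exCl_fvars : ∀ (k : ℕ) (φ : Formula L),
    (exCl k φ).fvars = φ.fvars \ {j | j < k}
  | 0, φ => by
      show φ.fvars = φ.fvars \ {j | j < 0}
      have : {j : ℕ | j < 0} = ∅ := by ext j; simp
      rw [this, Set.diff_empty]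
  | (k+1), φ => by
      show (exCl k (.ex k φ)).fvars = _
      rw [exCl_fvars k (.ex k φ)]
      show (φ.fvars \ {k}) \ {j | j < k} = φ.fvars \ {j | j < k + 1}
      ext j
      simp only [Set.mem_diff, Set.mem_singleton_iff, Set.mem_setOf_eq]
      constructor
      · rintro ⟨⟨h1, h2⟩, h3⟩; exact ⟨h1, by omega⟩
      · rintro ⟨h1, h2⟩; exact ⟨⟨h1, by omega⟩, by omega⟩

/-- Override the first `k` variables by a tuple. -/
def ovr {D : Type u} (k : ℕ) (v : ℕ → D) (w : Fin k → D) : ℕ → D :=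
  fun j => if h : j < k then w ⟨j, h⟩ else v j

lemma exCl_val (M : Structure L A) : ∀ (k : ℕ) (φ : Formula L) (v : ℕ → M.Dom),
    (exCl k φ).val M v = ⨆ w : Fin k → M.Dom, φ.val M (ovr k v w)
  | 0, φ, v => by
      have he : ∀ w : Fin 0 → M.Dom, ovr 0 v w = v := by
        intro w; funext j; exact dif_neg (Nat.not_lt_zero j)
      rw [show (⨆ w : Fin 0 → M.Dom, φ.val M (ovr 0 v w))
        = ⨆ w : Fin 0 → M.Dom, φ.val M v from by simp only [he], iSup_const]
      rfl
  | (k+1), φ, v => by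
      show (exCl k (.ex k φ)).val M v = _
      rw [exCl_val M k (.ex k φ) v]
      have key : ∀ (w : Fin k → M.Dom) (a : M.Dom),
          Function.update (ovr k v w) k a
            = ovr (k+1) v (fun j => if h : (j : ℕ) < k then w ⟨j, h⟩ else a) := by
        intro w a
        funext j
        by_cases hj : j = k
        · rw [hj, Function.update_self]
          have h3 : k < k + 1 := Nat.lt_succ_self k
          rw [show ovr (k+1) v _ k = _ from dif_pos h3]
          show a = if h : k < k then w ⟨k, h⟩ else a
          rw [dif_neg (lt_irrefl k)]
        · rw [Function.update_of_ne hj]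
          by_cases h2 : j < k
          · have h3 : j < k + 1 := by omega
            rw [show ovr k v w j = w ⟨j, h2⟩ from dif_pos h2,
              show ovr (k+1) v _ j = _ from dif_pos h3]
            show w ⟨j, h2⟩ = if h : j < k then w ⟨j, h⟩ else a
            rw [dif_pos h2]
          · rw [show ovr k v w j = v j from dif_neg h2,
              show ovr (k+1) v _ j = v j from dif_neg (by omega : ¬ j < k + 1)]
      show (⨆ w : Fin k → M.Dom, (Formula.ex k φ).val M (ovr k v w)) = _
      have hex : ∀ w : Fin k → M.Dom, (Formula.ex k φ).val M (ovr k v w)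
          = ⨆ a : M.Dom, φ.val M (Function.update (ovr k v w) k a) := fun w => rfl
      simp only [hex, key]
      refine le_antisymm ?_ ?_
      · refine iSup_le (fun w => iSup_le (fun a => ?_))
        exact le_iSup (fun w' : Fin (k+1) → M.Dom => φ.val M (ovr (k+1) v w'))
          (fun j => if h : (j : ℕ) < k then w ⟨j, h⟩ else a)
      · refine iSup_le (fun w' => ?_)
        have hw' : (fun j : Fin (k+1) => if h : (j : ℕ) < k
            then (fun i : Fin k => w' ⟨i.1, i.2.trans (Nat.lt_succ_self k)⟩) ⟨j, h⟩
            else w' ⟨k, Nat.lt_succ_self k⟩) = w' := by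
          funext j
          by_cases hj : (j : ℕ) < k
          · rw [dif_pos hj]
          · rw [dif_neg hj]
            congr 1
            have : (j : ℕ) = k := by omega
            exact Fin.ext this.symm
        calc φ.val M (ovr (k+1) v w')
            = φ.val M (ovr (k+1) v (fun j => if h : (j : ℕ) < k
                then (fun i : Fin k => w' ⟨i.1, i.2.trans (Nat.lt_succ_self k)⟩) ⟨j, h⟩
                else w' ⟨k, Nat.lt_succ_self k⟩)) := by rw [hw']
          _ ≤ ⨆ a : M.Dom, φ.val M (ovr (k+1) v (fun j => if h : (j : ℕ) < k
                then (fun i : Fin k => w' ⟨i.1, i.2.trans (Nat.lt_succ_self k)⟩) ⟨j, h⟩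
                else a)) := le_iSup (fun a : M.Dom => φ.val M (ovr (k+1) v
                  (fun j => if h : (j : ℕ) < k
                    then (fun i : Fin k => w' ⟨i.1, i.2.trans (Nat.lt_succ_self k)⟩) ⟨j, h⟩
                    else a))) (w' ⟨k, Nat.lt_succ_self k⟩)
          _ ≤ _ := le_iSup (fun w : Fin k → M.Dom => ⨆ a : M.Dom, φ.val M
                (ovr (k+1) v (fun j => if h : (j : ℕ) < k then w ⟨j, h⟩ else a)))
                (fun i : Fin k => w' ⟨i.1, i.2.trans (Nat.lt_succ_self k)⟩)

lemma exCl_val_one (M : Structure L A) (k : ℕ) (φ : Formula L) (v : ℕ → M.Dom) :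
    (exCl k φ).val M v = 1 ↔ ∃ w : Fin k → M.Dom, φ.val M (ovr k v w) = 1 := by
  rw [exCl_val M k φ v, iSup_eq_one]

end PPTfae
namespace PPTfae
variable {A : Type u} [MTLChain A] {L : Lang.{u}}

/-- The type of "requirements" on a prospective homomorphism out of `Mst`. -/
def Req (Mst : Structure L A) : Type u :=
  (Σ P : L.Pred, (Fin (L.predAr P) → Mst.Dom)) ⊕ (Σ f : L.Func, (Fin (L.funcAr f) → Mst.Dom))

/-- The atomic formula associated to a requirement (relative to an indexing of
domain elements by variables). -/
def atomOf (Mst : Structure L A) (idx : Mst.Dom → ℕ) : Req Mst → Formula L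
  | .inl ⟨P, d⟩ =>
      if Mst.relMap P d = 1 then .rel P (fun k => .var (idx (d k))) else .eq (.var 0) (.var 0)
  | .inr ⟨f, d⟩ => .eq (.func f (fun k => .var (idx (d k)))) (.var (idx (Mst.funMap f d)))

/-- The finitely many domain elements mentioned by a requirement. -/
noncomputable def elemsOf (Mst : Structure L A) : Req Mst → Finset Mst.Dom
  | .inl ⟨_, d⟩ => Finset.univ.image d
  | .inr ⟨f, d⟩ => insert (Mst.funMap f d) (Finset.univ.image d)

lemma atomOf_qf (Mst : Structure L A) (idx : Mst.Dom → ℕ) (r : Req Mst) :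
    QFWConj (atomOf Mst idx r) := by
  rcases r with ⟨P, d⟩ | ⟨f, d⟩
  · show QFWConj (if _ then _ else _)
    split
    · exact QFWConj.atom (IsAtomicFormula.rel _ _)
    · exact QFWConj.atom (IsAtomicFormula.eq _ _)
  · exact QFWConj.atom (IsAtomicFormula.eq _ _)

lemma atomOf_fvars (Mst : Structure L A) (idx : Mst.Dom → ℕ) (n : ℕ)
    (hidx : ∀ m, idx m < n + 1) (r : Req Mst) :
    (atomOf Mst idx r).fvars ⊆ {j | j < n + 1} := by
  rcases r with ⟨P, d⟩ | ⟨f, d⟩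
  · show (Formula.fvars (if _ then _ else _)) ⊆ _
    split
    · show (⋃ k, (Term.var (idx (d k)) : Term L).fvars) ⊆ _
      refine Set.iUnion_subset (fun k => ?_)
      show ({idx (d k)} : Set ℕ) ⊆ _
      simp only [Set.singleton_subset_iff, Set.mem_setOf_eq]
      exact hidx (d k)
    · show ((Term.var 0 : Term L).fvars ∪ (Term.var 0 : Term L).fvars) ⊆ _
      show (({0} : Set ℕ) ∪ {0}) ⊆ _
      simp only [Set.union_self, Set.singleton_subset_iff, Set.mem_setOf_eq]
      omega
  · show ((Term.func f (fun k => Term.var (idx (d k)))).fvars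
      ∪ (Term.var (idx (Mst.funMap f d)) : Term L).fvars) ⊆ _
    refine Set.union_subset ?_ ?_
    · show (⋃ k, (Term.var (idx (d k)) : Term L).fvars) ⊆ _
      refine Set.iUnion_subset (fun k => ?_)
      show ({idx (d k)} : Set ℕ) ⊆ _
      simp only [Set.singleton_subset_iff, Set.mem_setOf_eq]
      exact hidx (d k)
    · show ({idx (Mst.funMap f d)} : Set ℕ) ⊆ _
      simp only [Set.singleton_subset_iff, Set.mem_setOf_eq]
      exact hidx _

/-- Any finite set of requirements can be realized in `N`, provided `N`
validates all ∧-primitive consequences of `Mst`. -/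
lemma exists_assignment (Mst N : Structure L A)
    (hstar : ∀ σ : Formula L, IsWPrimitive σ → σ.IsSentence → Valid Mst σ → Valid N σ)
    (hbot : ¬ (⊥ : A) = 1) (s : Finset (Req Mst)) :
    ∃ h : Mst.Dom → N.Dom,
      (∀ (P : L.Pred) (d : Fin (L.predAr P) → Mst.Dom), (Sum.inl ⟨P, d⟩) ∈ s →
        Mst.relMap P d = 1 → N.relMap P (h ∘ d) = 1) ∧
      (∀ (f : L.Func) (d : Fin (L.funcAr f) → Mst.Dom), (Sum.inr ⟨f, d⟩) ∈ s →
        h (Mst.funMap f d) = N.funMap f (h ∘ d)) := by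
  classical
  set E : Finset Mst.Dom := s.biUnion (elemsOf Mst) with hE
  set n : ℕ := E.card with hn
  set eqv : {x // x ∈ E} ≃ Fin n := E.equivFin with heqv
  set idx : Mst.Dom → ℕ := fun m => if h : m ∈ E then (eqv ⟨m, h⟩ : ℕ) else 0 with hidxdef
  have hidx : ∀ m, idx m < n + 1 := by
    intro m
    simp only [hidxdef]
    by_cases h : m ∈ E
    · rw [dif_pos h]
      exact (eqv ⟨m, h⟩).2.trans (Nat.lt_succ_self n)
    · rw [dif_neg h]
      omega
  have hidxE : ∀ m (h : m ∈ E), idx m < n := by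
    intro m h
    simp only [hidxdef]
    rw [dif_pos h]
    exact (eqv ⟨m, h⟩).2
  set matrix : Formula L := conjList (s.toList.map (atomOf Mst idx)) with hmatrix
  set ψ : Formula L := exCl (n + 1) matrix with hψ
  have hψw : IsWPrimitive ψ :=
    exCl_wprim _ (IsWPrimitive.base (conjList_qf (by
      intro φ hφ
      obtain ⟨r, _, rfl⟩ := List.mem_map.1 hφ
      exact atomOf_qf Mst idx r)))
  have hψs : ψ.IsSentence := by
    show (exCl (n+1) matrix).fvars = ∅
    rw [exCl_fvars]
    refine Set.diff_eq_empty.2 ?_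
    refine conjList_fvars (by show (0:ℕ) < n + 1; omega) ?_
    intro φ hφ
    obtain ⟨r, _, rfl⟩ := List.mem_map.1 hφ
    exact atomOf_fvars Mst idx n hidx r
  -- membership of mentioned elements in E
  have hmemrel : ∀ (P : L.Pred) (d : Fin (L.predAr P) → Mst.Dom), Sum.inl ⟨P, d⟩ ∈ s →
      ∀ k, d k ∈ E := by
    intro P d hs k
    refine Finset.mem_biUnion.2 ⟨_, hs, ?_⟩
    show d k ∈ Finset.univ.image d
    exact Finset.mem_image.2 ⟨k, Finset.mem_univ k, rfl⟩
  have hmemfun : ∀ (f : L.Func) (d : Fin (L.funcAr f) → Mst.Dom), Sum.inr ⟨f, d⟩ ∈ s →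
      (∀ k, d k ∈ E) ∧ Mst.funMap f d ∈ E := by
    intro f d hs
    constructor
    · intro k
      refine Finset.mem_biUnion.2 ⟨_, hs, ?_⟩
      show d k ∈ insert (Mst.funMap f d) (Finset.univ.image d)
      exact Finset.mem_insert.2 (Or.inr (Finset.mem_image.2 ⟨k, Finset.mem_univ k, rfl⟩))
    · refine Finset.mem_biUnion.2 ⟨_, hs, ?_⟩
      show Mst.funMap f d ∈ insert (Mst.funMap f d) (Finset.univ.image d)
      exact Finset.mem_insert_self _ _
  -- ψ is valid in Mst
  have hvalMst : Valid Mst ψ := by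
    intro v
    rw [hψ, exCl_val_one]
    refine ⟨fun j => if h : (j : ℕ) < n then (eqv.symm ⟨j, h⟩ : Mst.Dom) else v 0, ?_⟩
    set w : Fin (n+1) → Mst.Dom := fun j => if h : (j : ℕ) < n then (eqv.symm ⟨j, h⟩ : Mst.Dom)
      else v 0 with hw
    have hkey : ∀ m (h : m ∈ E), ovr (n+1) v w (idx m) = m := by
      intro m h
      have h1 : idx m < n := hidxE m h
      rw [show ovr (n+1) v w (idx m) = w ⟨idx m, h1.trans (Nat.lt_succ_self n)⟩
        from dif_pos (h1.trans (Nat.lt_succ_self n))]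
      rw [hw]
      simp only
      rw [dif_pos (show ((⟨idx m, h1.trans (Nat.lt_succ_self n)⟩ : Fin (n+1)) : ℕ) < n from h1)]
      have : (⟨((⟨idx m, h1.trans (Nat.lt_succ_self n)⟩ : Fin (n+1)) : ℕ), h1⟩ : Fin n)
          = eqv ⟨m, h⟩ := by
        refine Fin.ext ?_
        show idx m = _
        simp only [hidxdef]
        rw [dif_pos h]
      rw [this, Equiv.symm_apply_apply]
    rw [hmatrix, conjList_val]
    intro φ hφ
    obtain ⟨r, hr, rfl⟩ := List.mem_map.1 hφ
    have hrs : r ∈ s := Finset.mem_toList.1 hr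
    rcases r with ⟨P, d⟩ | ⟨f, d⟩
    · show (Formula.val Mst (if _ then _ else _) _) = 1
      split
      next h1 =>
        show Mst.relMap P (fun k => ovr (n+1) v w (idx (d k))) = 1
        have : (fun k => ovr (n+1) v w (idx (d k))) = d := by
          funext k
          exact hkey (d k) (hmemrel P d hrs k)
        rw [this]
        exact h1
      next =>
        show (if ovr (n+1) v w 0 = ovr (n+1) v w 0 then (1:A) else ⊥) = 1
        rw [if_pos rfl]
    · show (if (Term.func f (fun k => Term.var (idx (d k)))).val Mst (ovr (n+1) v w)
          = ovr (n+1) v w (idx (Mst.funMap f d)) then (1:A) else ⊥) = 1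
      rw [if_pos]
      show Mst.funMap f (fun k => ovr (n+1) v w (idx (d k))) = _
      have h2 : (fun k => ovr (n+1) v w (idx (d k))) = d := by
        funext k
        exact hkey (d k) ((hmemfun f d hrs).1 k)
      rw [h2, hkey (Mst.funMap f d) (hmemfun f d hrs).2]
  -- transfer to N and extract the witnesses
  have hvalN : Valid N ψ := hstar ψ hψw hψs hvalMst
  have v₀ : ℕ → N.Dom := fun _ => Classical.arbitrary _
  have := hvalN v₀
  rw [hψ, exCl_val_one] at this
  obtain ⟨w, hw1⟩ := this
  rw [hmatrix, conjList_val] at hw1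
  refine ⟨fun m => ovr (n+1) v₀ w (idx m), ?_, ?_⟩
  · intro P d hs h1
    have hmem : atomOf Mst idx (Sum.inl ⟨P, d⟩) ∈ s.toList.map (atomOf Mst idx) :=
      List.mem_map.2 ⟨_, Finset.mem_toList.2 hs, rfl⟩
    have := hw1 _ hmem
    rw [show atomOf Mst idx (Sum.inl ⟨P, d⟩) = .rel P (fun k => .var (idx (d k)))
      from if_pos h1] at this
    exact this
  · intro f d hs
    have hmem : atomOf Mst idx (Sum.inr ⟨f, d⟩) ∈ s.toList.map (atomOf Mst idx) :=
      List.mem_map.2 ⟨_, Finset.mem_toList.2 hs, rfl⟩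
    have h3 := hw1 _ hmem
    have h4 : (if (Term.func f (fun k => Term.var (idx (d k)))).val N (ovr (n+1) v₀ w)
        = ovr (n+1) v₀ w (idx (Mst.funMap f d)) then (1:A) else ⊥) = 1 := h3
    by_cases h5 : (Term.func f (fun k => Term.var (idx (d k)))).val N (ovr (n+1) v₀ w)
        = ovr (n+1) v₀ w (idx (Mst.funMap f d))
    · exact h5.symm
    · rw [if_neg h5] at h4
      exact absurd h4 hbot

end PPTfae
namespace PPTfae
variable {A : Type u} [MTLChain A] {L : Lang.{u}}

/-- There is a homomorphism from `Mst` into some ultrapower of `N`, provided `N`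
validates all ∧-primitive consequences of `Mst`. -/
lemma exists_hom_upow (Mst N : Structure L A)
    (hstar : ∀ σ : Formula L, IsWPrimitive σ → σ.IsSentence → Valid Mst σ → Valid N σ)
    (hbot : ¬ (⊥ : A) = 1) :
    ∃ (U : Ultrafilter (Finset (Req Mst))) (g : Mst.Dom → (upow U N).Dom),
      IsHom Mst (upow U N) g := by
  classical
  choose hs hs1 hs2 using exists_assignment Mst N hstar hbot
  haveI : Nonempty (Finset (Req Mst)) := ⟨∅⟩
  set U : Ultrafilter (Finset (Req Mst)) := Ultrafilter.of Filter.atTop with hU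
  have hUof : ∀ r : Req Mst, {s : Finset (Req Mst) | r ∈ s} ∈ U := by
    intro r
    refine Ultrafilter.of_le Filter.atTop ?_
    refine Filter.mem_atTop_sets.2 ⟨{r}, ?_⟩
    intro s hss
    exact hss (Finset.mem_singleton_self r)
  refine ⟨U, fun m => Quotient.mk _ (fun s => hs s m), ?_⟩
  constructor
  · intro f d
    rw [upow_funMap U N f ((fun m => Quotient.mk (aeSetoid U N) (fun s => hs s m)) ∘ d)
      (fun k => fun s => hs s (d k)) (fun k => rfl)]
    refine Quotient.sound ?_
    refine Filter.mem_of_superset (hUof (Sum.inr ⟨f, d⟩)) ?_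
    intro s hss
    exact hs2 s f d hss
  · intro P d h1
    rw [upow_relMap U N P ((fun m => Quotient.mk (aeSetoid U N) (fun s => hs s m)) ∘ d)
      (fun k => fun s => hs s (d k)) (fun k => rfl)]
    refine limU_eq U ?_
    refine Filter.mem_of_superset (hUof (Sum.inl ⟨P, d⟩)) ?_
    intro s hss
    exact hs1 s P d hss h1

end PPTfae

open PPTfae

/-- **Corollary: five-way characterization.**  For a consistent theory `T`,
the following are equivalent: closure under weak `A`-direct products and
homomorphisms; closure under `A`-direct products and homomorphisms;
axiomatizability by ∧-primitive sentences; by &-primitive sentences; and by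
positive-primitive (∧&-primitive) sentences. -/
theorem pp_axiomatization_tfae {A : Type u} [MTLChain A] {L : Lang.{u}}
    (T : Set (Formula L)) (hsent : ∀ σ ∈ T, σ.IsSentence)
    (hcons : ∃ M : Structure L A, Models M T) :
    [((∀ (I : Type u) [Nonempty I] (Ms : I → Structure L A),
          (∀ i, Models (Ms i) T) → ∀ W : WeakProdData Ms, Models W.toStructure T) ∧
       (∀ (M N : Structure L A) (g : M.Dom → N.Dom),
          IsHom M N g → Models M T → Models N T)),
     ((∀ (I : Type u) [Nonempty I] (Ms : I → Structure L A),
          (∀ i, Models (Ms i) T) → Models (dirProd Ms) T) ∧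
       (∀ (M N : Structure L A) (g : M.Dom → N.Dom),
          IsHom M N g → Models M T → Models N T)),
     (∃ Sig : Set (Formula L), (∀ σ ∈ Sig, IsWPrimitive σ ∧ σ.IsSentence) ∧
        ∀ M : Structure L A, Models M T ↔ Models M Sig),
     (∃ Sig : Set (Formula L), (∀ σ ∈ Sig, IsSPrimitive σ ∧ σ.IsSentence) ∧
        ∀ M : Structure L A, Models M T ↔ Models M Sig),
     (∃ Sig : Set (Formula L), (∀ σ ∈ Sig, IsPP σ ∧ σ.IsSentence) ∧
        ∀ M : Structure L A, Models M T ↔ Models M Sig)].TFAE := by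
  tfae_have 1 → 2 := by
    rintro ⟨hw, hh⟩
    refine ⟨fun I _ Ms hMs => ?_, hh⟩
    rw [dirProd_eq_toStructure]
    exact hw I Ms hMs (dirW Ms)
  tfae_have 2 → 3 := by
    rintro ⟨hprod, hhom⟩
    refine ⟨{σ | IsWPrimitive σ ∧ σ.IsSentence ∧ ∀ M : Structure L A, Models M T → Valid M σ},
      fun σ hσ => ⟨hσ.1, hσ.2.1⟩, fun N => ⟨fun hM σ hσ => hσ.2.2 N hM, fun hN => ?_⟩⟩
    by_cases hbot : (⊥ : A) = 1
    · intro σ _ v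
      exact all_eq_one hbot _
    · have hstarex : ∃ Mst : Structure L A, Models Mst T ∧
          ∀ σ : Formula L, IsWPrimitive σ → σ.IsSentence → Valid Mst σ → Valid N σ := by
        by_cases hF : Nonempty {σ : Formula L // IsWPrimitive σ ∧ σ.IsSentence ∧ ¬ Valid N σ}
        · haveI := hF
          have hex : ∀ σ : {σ : Formula L // IsWPrimitive σ ∧ σ.IsSentence ∧ ¬ Valid N σ},
              ∃ M : Structure L A, Models M T ∧ ¬ Valid M σ.1 := by
            intro σ
            by_contra hc
            push_neg at hc
            exact σ.2.2.2 (hN σ.1 ⟨σ.2.1, σ.2.2.1, fun M hM => hc M hM⟩)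
          choose Mof hMof1 hMof2 using hex
          refine ⟨dirProd Mof, hprod _ Mof hMof1, ?_⟩
          intro σ hw hsen hval
          by_contra hnv
          exact hMof2 ⟨σ, hw, hsen, hnv⟩
            (pp_hom_valid (proj_hom Mof ⟨σ, hw, hsen, hnv⟩) (wprim_pp hw) hsen hval)
        · obtain ⟨M0, hM0⟩ := hcons
          refine ⟨M0, hM0, fun σ hw hsen _ => ?_⟩
          by_contra hnv
          exact hF ⟨⟨σ, hw, hsen, hnv⟩⟩
      obtain ⟨Mst, hMstT, hstar⟩ := hstarex
      obtain ⟨U, g, hg⟩ := exists_hom_upow Mst N hstar hbot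
      have hupow : Models (upow U N) T := hhom Mst (upow U N) g hg hMstT
      intro σ hσ
      exact (upow_valid U N σ).1 (hupow σ hσ)
  tfae_have 3 → 5 := by
    rintro ⟨Sig, h1, h2⟩
    exact ⟨Sig, fun σ hσ => ⟨wprim_pp (h1 σ hσ).1, (h1 σ hσ).2⟩, h2⟩
  tfae_have 4 → 5 := by
    rintro ⟨Sig, h1, h2⟩
    exact ⟨Sig, fun σ hσ => ⟨sprim_pp (h1 σ hσ).1, (h1 σ hσ).2⟩, h2⟩
  tfae_have 5 → 4 := by
    rintro ⟨Sig, h1, h2⟩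
    refine ⟨swapS '' Sig, ?_, ?_⟩
    · rintro σ ⟨τ, hτ, rfl⟩
      refine ⟨swapS_pp (h1 τ hτ).1, ?_⟩
      show (swapS τ).fvars = ∅
      rw [swapS_fvars]
      exact (h1 τ hτ).2
    · intro M
      rw [h2 M]
      constructor
      · rintro hM σ ⟨τ, hτ, rfl⟩
        exact (swapW_valid (h1 τ hτ).1).2.2 (hM τ hτ)
      · intro hM τ hτ
        exact (swapW_valid (h1 τ hτ).1).2.1 (hM _ ⟨τ, hτ, rfl⟩)
  tfae_have 5 → 1 := by
    rintro ⟨Sig, h1, h2⟩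
    constructor
    · intro I _ Ms hMs W
      rw [h2]
      intro σ hσ v
      refine wp_pp W (h1 σ hσ).1 v (fun i => ?_)
      exact ((h2 (Ms i)).1 (hMs i)) σ hσ _
    · intro M N g hg hM
      rw [h2]
      intro σ hσ
      exact pp_hom_valid hg (h1 σ hσ).1 (h1 σ hσ).2 (((h2 M).1 hM) σ hσ)
  tfae_finish
end
end

section
/- (Corollary: single-sentence pp-characterization.) Let A be a fixed finite MTL-chain, P a predicate language, and φ a P-sentence that has an A-model. Then φ is 1-equivalent to a positive-primitive sentence if and only if the class of A-models of φ is closed under homomorphisms and weak A-direct products. -/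
noncomputable section
open Classical

universe u

variable {A : Type u} [MTLChain A] {L : Lang.{u}}

/-! ### Auxiliary development -/

section Aux

variable {A : Type u} [MTLChain A] {L : Lang.{u}}

lemma MTL.le_one (a : A) : a ≤ 1 := by rw [MTLChain.one_eq_top]; exact le_top

lemma MTL.eq_one_of_one_le {a : A} (h : 1 ≤ a) : a = 1 := le_antisymm (MTL.le_one a) h

lemma MTL.mul_le_right (a b : A) : a * b ≤ b := by
  have := MTLChain.mul_mono (MTL.le_one a) b
  rw [mul_comm b a, mul_one] at this; exact this

lemma MTL.mul_le_left (a b : A) : a * b ≤ a := by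
  rw [mul_comm]; exact MTL.mul_le_right b a

lemma MTL.mul_eq_one {a b : A} : a * b = 1 ↔ a = 1 ∧ b = 1 := by
  constructor
  · intro h
    constructor
    · exact MTL.eq_one_of_one_le (by rw [← h]; exact MTL.mul_le_left a b)
    · exact MTL.eq_one_of_one_le (by rw [← h]; exact MTL.mul_le_right a b)
  · rintro ⟨rfl, rfl⟩; rw [mul_one]

lemma MTL.inf_eq_one {a b : A} : a ⊓ b = 1 ↔ a = 1 ∧ b = 1 := by
  rw [MTLChain.one_eq_top]; exact inf_eq_top_iff

lemma MTL.subsingleton_of_bot_eq_one (h : (⊥ : A) = 1) : ∀ a b : A, a = b := by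
  intro a b
  have ha : a = ⊥ := le_antisymm (by rw [h, MTLChain.one_eq_top]; exact le_top) bot_le
  have hb : b = ⊥ := le_antisymm (by rw [h, MTLChain.one_eq_top]; exact le_top) bot_le
  rw [ha, hb]

/-- supremum over a nonempty type of an `A`-valued function is attained. -/
lemma MTL.exists_sup_attained {D : Type u} [Nonempty D] (f : D → A) :
    ∃ d, f d = ⨆ x, f x := by
  have hfin : (Set.range f).Finite := Set.toFinite _
  have hne : (Set.range f).Nonempty := Set.range_nonempty f
  obtain ⟨d, hd⟩ := hne.csSup_mem hfin
  exact ⟨d, by rw [hd]; exact sSup_range⟩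

lemma MTL.exists_inf_attained {D : Type u} [Nonempty D] (f : D → A) :
    ∃ d, f d = ⨅ x, f x := by
  have hfin : (Set.range f).Finite := Set.toFinite _
  have hne : (Set.range f).Nonempty := Set.range_nonempty f
  obtain ⟨d, hd⟩ := hne.csInf_mem hfin
  exact ⟨d, by rw [hd]; exact sInf_range⟩

lemma MTL.iSup_eq_one_iff {D : Type u} [Nonempty D] (f : D → A) :
    (⨆ x, f x) = 1 ↔ ∃ d, f d = 1 := by
  constructor
  · intro h
    obtain ⟨d, hd⟩ := MTL.exists_sup_attained f
    exact ⟨d, by rw [hd, h]⟩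
  · rintro ⟨d, hd⟩
    exact le_antisymm (MTL.le_one _) (hd ▸ le_iSup f d)

lemma MTL.iInf_eq_one_iff {D : Type u} [Nonempty D] (f : D → A) :
    (⨅ x, f x) = 1 ↔ ∀ d, f d = 1 := by
  rw [MTLChain.one_eq_top, iInf_eq_top]

lemma MTL.inf_iSup {D : Type u} [Nonempty D] (a : A) (f : D → A) :
    a ⊓ (⨆ x, f x) = ⨆ x, a ⊓ f x := by
  obtain ⟨d, hd⟩ := MTL.exists_sup_attained f
  refine le_antisymm ?_ ?_
  · rw [← hd]; exact le_iSup (fun x => a ⊓ f x) d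
  · exact iSup_le fun x => inf_le_inf_left a (le_iSup f x)

lemma MTL.iSup_inf {D : Type u} [Nonempty D] (a : A) (f : D → A) :
    (⨆ x, f x) ⊓ a = ⨆ x, f x ⊓ a := by
  rw [inf_comm, MTL.inf_iSup]; simp [inf_comm]

/-! ### Semantics lemmas -/

lemma Term.val_congr {M : Structure L A} {v w : ℕ → M.Dom} :
    ∀ {t : Term L}, (∀ n ∈ t.fvars, v n = w n) → t.val M v = t.val M w
  | .var n, h => h n (by simp [Term.fvars])
  | .func f ts, h => by
    simp only [Term.val]
    congr 1
    funext k
    exact Term.val_congr (fun n hn => h n (by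
      simp only [Term.fvars, Set.mem_iUnion]; exact ⟨k, hn⟩))

lemma Formula.val_congr {M : Structure L A} :
    ∀ {φ : Formula L} {v w : ℕ → M.Dom},
      (∀ n ∈ φ.fvars, v n = w n) → φ.val M v = φ.val M w
  | .rel P ts, v, w, h => by
    simp only [Formula.val]
    congr 1
    funext k
    exact Term.val_congr (fun n hn => h n (by
      simp only [Formula.fvars, Set.mem_iUnion]; exact ⟨k, hn⟩))
  | .eq t₁ t₂, v, w, h => by
    simp only [Formula.val]
    rw [Term.val_congr (fun n hn => h n (Or.inl hn)),
        Term.val_congr (fun n hn => h n (Or.inr hn))]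
  | .sconj φ ψ, v, w, h => by
    simp only [Formula.val]
    rw [Formula.val_congr (fun n hn => h n (Or.inl hn)),
        Formula.val_congr (fun n hn => h n (Or.inr hn))]
  | .wconj φ ψ, v, w, h => by
    simp only [Formula.val]
    rw [Formula.val_congr (fun n hn => h n (Or.inl hn)),
        Formula.val_congr (fun n hn => h n (Or.inr hn))]
  | .wdisj φ ψ, v, w, h => by
    simp only [Formula.val]
    rw [Formula.val_congr (fun n hn => h n (Or.inl hn)),
        Formula.val_congr (fun n hn => h n (Or.inr hn))]
  | .impl φ ψ, v, w, h => by
    simp only [Formula.val]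
    rw [Formula.val_congr (fun n hn => h n (Or.inl hn)),
        Formula.val_congr (fun n hn => h n (Or.inr hn))]
  | .all x φ, v, w, h => by
    simp only [Formula.val]
    refine iInf_congr fun a => Formula.val_congr fun n hn => ?_
    by_cases hx : n = x
    · subst hx; simp [Function.update]
    · rw [Function.update_of_ne hx, Function.update_of_ne hx]
      exact h n ⟨hn, hx⟩
  | .ex x φ, v, w, h => by
    simp only [Formula.val]
    refine iSup_congr fun a => Formula.val_congr fun n hn => ?_
    by_cases hx : n = x
    · subst hx; simp [Function.update]
    · rw [Function.update_of_ne hx, Function.update_of_ne hx]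
      exact h n ⟨hn, hx⟩

lemma Formula.val_sentence {M : Structure L A} {φ : Formula L} (hs : φ.IsSentence)
    (v w : ℕ → M.Dom) : φ.val M v = φ.val M w :=
  Formula.val_congr (fun n hn => by rw [Formula.IsSentence] at hs; rw [hs] at hn; cases hn)

lemma valid_iff_val {M : Structure L A} {φ : Formula L} (hs : φ.IsSentence)
    (v : ℕ → M.Dom) : Valid M φ ↔ φ.val M v = 1 := by
  constructor
  · intro h; exact h v
  · intro h w; rw [Formula.val_sentence hs w v]; exact h

lemma Term.val_hom {M N : Structure L A} {g : M.Dom → N.Dom} (hg : IsHom M N g)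
    (v : ℕ → M.Dom) : ∀ t : Term L, g (t.val M v) = t.val N (g ∘ v)
  | .var n => rfl
  | .func f ts => by
    simp only [Term.val]
    rw [hg.map_fun]
    congr 1
    funext k
    exact Term.val_hom hg v (ts k)

lemma QFConj.val_hom (hbot : (⊥ : A) ≠ 1) {M N : Structure L A} {g : M.Dom → N.Dom}
    (hg : IsHom M N g) {φ : Formula L} (h : QFConj φ) :
    ∀ {v : ℕ → M.Dom}, φ.val M v = 1 → φ.val N (g ∘ v) = 1 := by
  induction h with
  | atom ha =>
    intro v h1
    cases ha with
    | rel P ts =>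
      simp only [Formula.val] at h1 ⊢
      have : (fun i => (ts i).val N (g ∘ v)) = g ∘ (fun i => (ts i).val M v) := by
        funext k; exact (Term.val_hom hg v (ts k)).symm
      rw [this]
      exact hg.map_rel P _ h1
    | eq t₁ t₂ =>
      simp only [Formula.val] at h1 ⊢
      split at h1
      case isTrue heq =>
        rw [if_pos]
        rw [← Term.val_hom hg v t₁, ← Term.val_hom hg v t₂, heq]
      case isFalse => exact absurd h1 hbot
  | sconj h₁ h₂ ih₁ ih₂ =>
    intro v h1
    simp only [Formula.val] at h1 ⊢
    rw [MTL.mul_eq_one] at h1 ⊢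
    exact ⟨ih₁ h1.1, ih₂ h1.2⟩
  | wconj h₁ h₂ ih₁ ih₂ =>
    intro v h1
    simp only [Formula.val] at h1 ⊢
    rw [MTL.inf_eq_one] at h1 ⊢
    exact ⟨ih₁ h1.1, ih₂ h1.2⟩

lemma IsPP.val_hom (hbot : (⊥ : A) ≠ 1) {M N : Structure L A} {g : M.Dom → N.Dom}
    (hg : IsHom M N g) {α : Formula L} (h : IsPP α) :
    ∀ {v : ℕ → M.Dom}, α.val M v = 1 → α.val N (g ∘ v) = 1 := by
  induction h with
  | base hq => exact fun h1 => QFConj.val_hom hbot hg hq h1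
  | ex x hp ih =>
    intro v h1
    simp only [Formula.val] at h1 ⊢
    rw [MTL.iSup_eq_one_iff] at h1 ⊢
    obtain ⟨a, ha⟩ := h1
    refine ⟨g a, ?_⟩
    have hup : g ∘ Function.update v x a = Function.update (g ∘ v) x (g a) := by
      funext n
      by_cases hx : n = x
      · subst hx; simp [Function.update]
      · simp [Function.comp, Function.update_of_ne hx]
    rw [← hup]
    exact ih ha

lemma IsPP.valid_hom (hbot : (⊥ : A) ≠ 1) {M N : Structure L A} {g : M.Dom → N.Dom}
    (hg : IsHom M N g) {α : Formula L} (h : IsPP α) (hs : α.IsSentence)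
    (hv : Valid M α) : Valid N α := by
  rw [valid_iff_val hs (g ∘ (fun _ => Classical.arbitrary M.Dom))]
  exact IsPP.val_hom hbot hg h (hv _)

lemma Term.val_prod {I : Type u} [Nonempty I] {Ms : I → Structure L A}
    (W : WeakProdData Ms) (v : ℕ → ∀ i, (Ms i).Dom) (i : I) :
    ∀ t : Term L, t.val W.toStructure v i = t.val (Ms i) (fun n => v n i)
  | .var n => rfl
  | .func f ts => by
    simp only [Term.val, WeakProdData.toStructure]
    congr 1
    funext k
    exact Term.val_prod W v i (ts k)

lemma QFConj.val_prod (hbot : (⊥ : A) ≠ 1) {I : Type u} [Nonempty I]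
    {Ms : I → Structure L A} (W : WeakProdData Ms) {α : Formula L} (h : QFConj α) :
    ∀ {v : ℕ → ∀ i, (Ms i).Dom},
      (∀ i, α.val (Ms i) (fun n => v n i) = 1) → α.val W.toStructure v = 1 := by
  induction h with
  | atom ha =>
    intro v h1
    cases ha with
    | rel P ts =>
      simp only [Formula.val] at h1 ⊢
      refine (W.rel_one_iff P _).2 fun i => ?_
      have harg : (fun k => ((ts k).val W.toStructure v) i)
          = fun k => (ts k).val (Ms i) (fun n => v n i) := by
        funext k; exact Term.val_prod W v i (ts k)
      show ((Ms i).relMap P fun k => ((ts k).val W.toStructure v) i) = 1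
      rw [harg]
      exact h1 i
    | eq t₁ t₂ =>
      simp only [Formula.val] at h1 ⊢
      have heq : t₁.val W.toStructure v = t₂.val W.toStructure v := by
        funext i
        rw [Term.val_prod W v i t₁, Term.val_prod W v i t₂]
        have := h1 i
        split at this
        case isTrue h' => exact h'
        case isFalse => exact absurd this hbot
      rw [if_pos heq]
  | sconj h₁ h₂ ih₁ ih₂ =>
    intro v h1
    simp only [Formula.val] at h1 ⊢
    rw [MTL.mul_eq_one]
    exact ⟨ih₁ (fun i => (MTL.mul_eq_one.1 (h1 i)).1),
           ih₂ (fun i => (MTL.mul_eq_one.1 (h1 i)).2)⟩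
  | wconj h₁ h₂ ih₁ ih₂ =>
    intro v h1
    simp only [Formula.val] at h1 ⊢
    rw [MTL.inf_eq_one]
    exact ⟨ih₁ (fun i => (MTL.inf_eq_one.1 (h1 i)).1),
           ih₂ (fun i => (MTL.inf_eq_one.1 (h1 i)).2)⟩

lemma IsPP.val_prod (hbot : (⊥ : A) ≠ 1) {I : Type u} [Nonempty I]
    {Ms : I → Structure L A} (W : WeakProdData Ms) {α : Formula L} (h : IsPP α) :
    ∀ {v : ℕ → ∀ i, (Ms i).Dom},
      (∀ i, α.val (Ms i) (fun n => v n i) = 1) → α.val W.toStructure v = 1 := by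
  induction h with
  | base hq => exact fun h1 => QFConj.val_prod hbot W hq h1
  | @ex φ x hp ih =>
    intro v h1
    simp only [Formula.val] at h1 ⊢
    have hw : ∀ i, ∃ a : (Ms i).Dom,
        φ.val (Ms i) (Function.update (fun n => v n i) x a) = 1 := fun i =>
      (MTL.iSup_eq_one_iff _).1 (h1 i)
    choose c hc using hw
    rw [MTL.iSup_eq_one_iff]
    refine ⟨c, ih fun i => ?_⟩
    have harg : (fun n => Function.update v x c n i)
        = Function.update (fun n => v n i) x (c i) := by
      funext n
      by_cases hx : n = x
      · subst hx; simp [Function.update]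
      · rw [Function.update_of_ne hx, Function.update_of_ne hx]
    erw [harg]
    exact hc i

lemma IsPP.valid_prod (hbot : (⊥ : A) ≠ 1) {I : Type u} [Nonempty I]
    {Ms : I → Structure L A} (W : WeakProdData Ms) {α : Formula L} (h : IsPP α)
    (hv : ∀ i, Valid (Ms i) α) : Valid W.toStructure α := by
  intro v
  exact IsPP.val_prod hbot W h (fun i => hv i (fun n => v n i))

/-! ### Ultrafilter limits in a finite chain -/

section Ultra

variable {I : Type u} (U : Ultrafilter I)

lemma MTL.exists_limU (f : I → A) : ∃ a : A, {i | f i = a} ∈ U := by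
  by_contra h
  push_neg at h
  have hc : ∀ a : A, {i | f i = a}ᶜ ∈ U := fun a =>
    (Ultrafilter.compl_mem_iff_notMem).2 (h a)
  have hint : (⋂ a : A, {i | f i = a}ᶜ) ∈ U := Filter.iInter_mem.2 hc
  have hemp : (⋂ a : A, {i | f i = a}ᶜ) = ∅ := by
    ext i; simp
  rw [hemp] at hint
  exact Filter.empty_notMem (U : Filter I) hint

noncomputable def limU (f : I → A) : A := (MTL.exists_limU U f).choose

lemma limU_spec (f : I → A) : {i | f i = limU U f} ∈ U :=
  (MTL.exists_limU U f).choose_spec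

lemma limU_eq {f : I → A} {a : A} (h : {i | f i = a} ∈ U) : limU U f = a := by
  by_contra hne
  obtain ⟨i, hi1, hi2⟩ := Filter.nonempty_of_mem (Filter.inter_mem (limU_spec U f) h)
  exact hne (hi1 ▸ hi2)

lemma limU_congr {f g : I → A} (h : {i | f i = g i} ∈ U) : limU U f = limU U g := by
  refine limU_eq U ?_
  refine Filter.mem_of_superset (Filter.inter_mem h (limU_spec U g)) ?_
  rintro i ⟨hi1, hi2⟩
  exact hi1.trans hi2

lemma limU_const (a : A) : limU U (fun _ => a) = a :=
  limU_eq U (Filter.univ_mem' fun _ => rfl)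

lemma limU_map₂ (op : A → A → A) (f g : I → A) :
    limU U (fun i => op (f i) (g i)) = op (limU U f) (limU U g) := by
  refine limU_eq U ?_
  refine Filter.mem_of_superset (Filter.inter_mem (limU_spec U f) (limU_spec U g)) ?_
  rintro i ⟨hi1, hi2⟩
  show op (f i) (g i) = _
  rw [hi1, hi2]

lemma limU_le {f g : I → A} (h : {i | f i ≤ g i} ∈ U) : limU U f ≤ limU U g := by
  obtain ⟨i, hi1, hi2, hi3⟩ := Filter.nonempty_of_mem
    (Filter.inter_mem h (Filter.inter_mem (limU_spec U f) (limU_spec U g)))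
  rw [← hi2, ← hi3]
  exact hi1

lemma limU_eq_one_iff (f : I → A) : limU U f = 1 ↔ {i | f i = 1} ∈ U := by
  constructor
  · intro h; rw [← h]; exact limU_spec U f
  · exact limU_eq U

/-! ### Ultraproducts and Łoś's theorem -/

variable (Ns : I → Structure L A)

def uSetoid : Setoid (∀ i, (Ns i).Dom) where
  r x y := {i | x i = y i} ∈ U
  iseqv := by
    refine ⟨fun x => Filter.univ_mem' fun _ => rfl, fun h => ?_, fun h1 h2 => ?_⟩
    · refine Filter.mem_of_superset h fun i hi => hi.symm
    · refine Filter.mem_of_superset (Filter.inter_mem h1 h2) ?_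
      rintro i ⟨hi1, hi2⟩; exact hi1.trans hi2

def umk (x : ∀ i, (Ns i).Dom) : Quotient (uSetoid U Ns) := Quotient.mk _ x

noncomputable def UProd : Structure L A where
  Dom := Quotient (uSetoid U Ns)
  dom_nonempty := ⟨umk U Ns (fun i => Classical.arbitrary _)⟩
  funMap f d := umk U Ns (fun i => (Ns i).funMap f (fun k => (d k).out i))
  relMap P d := limU U (fun i => (Ns i).relMap P (fun k => (d k).out i))

lemma umk_eq_iff {x y : ∀ i, (Ns i).Dom} :
    umk U Ns x = umk U Ns y ↔ {i | x i = y i} ∈ U :=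
  ⟨fun h => Quotient.exact h, fun h => Quotient.sound h⟩

lemma uout_ae (x : ∀ i, (Ns i).Dom) : {i | (umk U Ns x).out i = x i} ∈ U :=
  Quotient.exact (Quotient.out_eq (umk U Ns x))

lemma uprod_funMap (f : L.Func) (x : Fin (L.funcAr f) → ∀ i, (Ns i).Dom) :
    (UProd U Ns).funMap f (fun k => umk U Ns (x k))
      = umk U Ns (fun i => (Ns i).funMap f (fun k => x k i)) := by
  refine (umk_eq_iff U Ns).2 ?_
  have h : (⋂ k, {i | (umk U Ns (x k)).out i = x k i}) ∈ U :=
    Filter.iInter_mem.2 fun k => uout_ae U Ns (x k)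
  refine Filter.mem_of_superset h fun i hi => ?_
  simp only [Set.mem_iInter, Set.mem_setOf_eq] at hi
  show (Ns i).funMap f (fun k => (umk U Ns (x k)).out i) = _
  congr 1
  funext k
  exact hi k

lemma uprod_relMap (P : L.Pred) (x : Fin (L.predAr P) → ∀ i, (Ns i).Dom) :
    (UProd U Ns).relMap P (fun k => umk U Ns (x k))
      = limU U (fun i => (Ns i).relMap P (fun k => x k i)) := by
  refine limU_congr U ?_
  have h : (⋂ k, {i | (umk U Ns (x k)).out i = x k i}) ∈ U :=
    Filter.iInter_mem.2 fun k => uout_ae U Ns (x k)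
  refine Filter.mem_of_superset h fun i hi => ?_
  simp only [Set.mem_iInter, Set.mem_setOf_eq] at hi
  show (Ns i).relMap P (fun k => (umk U Ns (x k)).out i) = _
  congr 1
  funext k
  exact hi k

lemma uprod_term_val (V : ℕ → ∀ i, (Ns i).Dom) : ∀ t : Term L,
    t.val (UProd U Ns) (fun n => umk U Ns (V n))
      = umk U Ns (fun i => t.val (Ns i) (fun n => V n i))
  | .var n => rfl
  | .func f ts => by
    simp only [Term.val]
    have ih : (fun k => (ts k).val (UProd U Ns) (fun n => umk U Ns (V n)))
        = fun k => umk U Ns (fun i => (ts k).val (Ns i) (fun n => V n i)) := by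
      funext k; exact uprod_term_val V (ts k)
    rw [ih, uprod_funMap]

lemma update_umk_eq (V : ℕ → ∀ i, (Ns i).Dom) (x : ℕ) (c : Quotient (uSetoid U Ns)) :
    Function.update (fun n => umk U Ns (V n)) x c
      = fun n => umk U Ns (Function.update V x c.out n) := by
  funext n
  by_cases hx : n = x
  · subst hx
    simp only [Function.update_self]
    exact (Quotient.out_eq c).symm
  · rw [Function.update_of_ne hx, Function.update_of_ne hx]

lemma update_coord_eq {D : I → Type u} (V : ℕ → ∀ i, D i) (x : ℕ)
    (w : ∀ i, D i) (i : I) :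
    (fun n => Function.update V x w n i) = Function.update (fun n => V n i) x (w i) := by
  funext n
  by_cases hx : n = x
  · subst hx; simp [Function.update]
  · rw [Function.update_of_ne hx, Function.update_of_ne hx]

theorem los : ∀ (φ : Formula L) (V : ℕ → ∀ i, (Ns i).Dom),
    φ.val (UProd U Ns) (fun n => umk U Ns (V n))
      = limU U (fun i => φ.val (Ns i) (fun n => V n i))
  | .rel P ts, V => by
    simp only [Formula.val]
    have ih : (fun k => (ts k).val (UProd U Ns) (fun n => umk U Ns (V n)))
        = fun k => umk U Ns (fun i => (ts k).val (Ns i) (fun n => V n i)) := by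
      funext k; exact uprod_term_val U Ns V (ts k)
    rw [ih, uprod_relMap]
  | .eq t₁ t₂, V => by
    simp only [Formula.val]
    rw [uprod_term_val U Ns V t₁, uprod_term_val U Ns V t₂]
    by_cases h : {i | t₁.val (Ns i) (fun n => V n i) = t₂.val (Ns i) (fun n => V n i)} ∈ U
    · erw [if_pos ((umk_eq_iff U Ns).2 h)]
      refine (limU_eq U ?_).symm
      refine Filter.mem_of_superset h fun i hi => ?_
      exact if_pos hi
    · erw [if_neg (fun hc => h ((umk_eq_iff U Ns).1 hc))]
      refine (limU_eq U ?_).symm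
      refine Filter.mem_of_superset ((Ultrafilter.compl_mem_iff_notMem).2 h) fun i hi => ?_
      exact if_neg hi
  | .sconj φ ψ, V => by
    simp only [Formula.val]
    rw [los φ V, los ψ V, limU_map₂ U (· * ·)]
  | .wconj φ ψ, V => by
    simp only [Formula.val]
    rw [los φ V, los ψ V, limU_map₂ U (· ⊓ ·)]
  | .wdisj φ ψ, V => by
    simp only [Formula.val]
    rw [los φ V, los ψ V, limU_map₂ U (· ⊔ ·)]
  | .impl φ ψ, V => by
    simp only [Formula.val]
    rw [los φ V, los ψ V, limU_map₂ U MTLChain.resid]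
  | .all x φ, V => by
    simp only [Formula.val]
    refine le_antisymm ?_ ?_
    · have hw : ∀ i, ∃ a : (Ns i).Dom,
          φ.val (Ns i) (Function.update (fun n => V n i) x a)
            = ⨅ b, φ.val (Ns i) (Function.update (fun n => V n i) x b) := fun i =>
        MTL.exists_inf_attained _
      choose w hwspec using hw
      have h2 : φ.val (UProd U Ns)
          (Function.update (fun n => umk U Ns (V n)) x (umk U Ns w))
          = limU U (fun i => ⨅ b, φ.val (Ns i) (Function.update (fun n => V n i) x b)) := by
        erw [update_umk_eq, los φ]
        refine limU_congr U ?_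
        refine Filter.mem_of_superset (uout_ae U Ns w) fun i hi => ?_
        show φ.val (Ns i) (fun n => Function.update V x (umk U Ns w).out n i) = _
        rw [update_coord_eq, hi, hwspec i]
      rw [← h2]
      exact iInf_le (fun a => φ.val (UProd U Ns)
        (Function.update (fun n => umk U Ns (V n)) x a)) (umk U Ns w)
    · refine le_iInf fun c => ?_
      erw [update_umk_eq, los φ]
      refine limU_le U (Filter.univ_mem' fun i => ?_)
      show (⨅ b, φ.val (Ns i) (Function.update (fun n => V n i) x b)) ≤ _
      rw [update_coord_eq]
      exact iInf_le (fun b => φ.val (Ns i) (Function.update (fun n => V n i) x b)) (c.out i)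
  | .ex x φ, V => by
    simp only [Formula.val]
    refine le_antisymm ?_ ?_
    · refine iSup_le fun c => ?_
      erw [update_umk_eq, los φ]
      refine limU_le U (Filter.univ_mem' fun i => ?_)
      show _ ≤ (⨆ b, φ.val (Ns i) (Function.update (fun n => V n i) x b))
      rw [update_coord_eq]
      exact le_iSup (fun b => φ.val (Ns i) (Function.update (fun n => V n i) x b)) (c.out i)
    · have hw : ∀ i, ∃ a : (Ns i).Dom,
          φ.val (Ns i) (Function.update (fun n => V n i) x a)
            = ⨆ b, φ.val (Ns i) (Function.update (fun n => V n i) x b) := fun i =>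
        MTL.exists_sup_attained _
      choose w hwspec using hw
      have h2 : φ.val (UProd U Ns)
          (Function.update (fun n => umk U Ns (V n)) x (umk U Ns w))
          = limU U (fun i => ⨆ b, φ.val (Ns i) (Function.update (fun n => V n i) x b)) := by
        erw [update_umk_eq, los φ]
        refine limU_congr U ?_
        refine Filter.mem_of_superset (uout_ae U Ns w) fun i hi => ?_
        show φ.val (Ns i) (fun n => Function.update V x (umk U Ns w).out n i) = _
        rw [update_coord_eq, hi, hwspec i]
      rw [← h2]
      exact le_iSup (fun a => φ.val (UProd U Ns)
        (Function.update (fun n => umk U Ns (V n)) x a)) (umk U Ns w)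

lemma uprod_valid_of_ae {γ : Formula L} (h : {i | Valid (Ns i) γ} ∈ U) :
    Valid (UProd U Ns) γ := by
  intro v
  have hv : v = fun n => umk U Ns ((v n).out) := by
    funext n; exact (Quotient.out_eq (v n)).symm
  rw [hv, los U Ns γ]
  exact (limU_eq_one_iff U _).2 (Filter.mem_of_superset h fun i hi => hi _)

lemma uprod_not_valid {γ : Formula L} (hs : γ.IsSentence)
    (h : {i | ¬ Valid (Ns i) γ} ∈ U) : ¬ Valid (UProd U Ns) γ := by
  intro hv
  have hV := hv (fun n => umk U Ns (fun i => Classical.arbitrary _))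
  rw [los U Ns γ] at hV
  obtain ⟨i, hi1, hi2⟩ := Filter.nonempty_of_mem
    (Filter.inter_mem ((limU_eq_one_iff U _).1 hV) h)
  exact hi2 ((valid_iff_val hs _).2 hi1)

lemma upower_valid_iff {N : Structure L A} {γ : Formula L} (hs : γ.IsSentence) :
    Valid (UProd U (fun _ : I => N)) γ ↔ Valid N γ := by
  constructor
  · intro h
    by_contra hc
    exact uprod_not_valid U _ hs (Filter.univ_mem' fun i => hc) h
  · intro h
    exact uprod_valid_of_ae U _ (Filter.univ_mem' fun i => h)

end Ultra

/-! ### Renaming of variables -/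

def Term.rename (ρ : ℕ → ℕ) : Term L → Term L
  | .var n => .var (ρ n)
  | .func f ts => .func f (fun k => (ts k).rename ρ)

def Formula.rename (ρ : ℕ → ℕ) : Formula L → Formula L
  | .rel P ts => .rel P (fun k => (ts k).rename ρ)
  | .eq t₁ t₂ => .eq (t₁.rename ρ) (t₂.rename ρ)
  | .sconj φ ψ => .sconj (φ.rename ρ) (ψ.rename ρ)
  | .wconj φ ψ => .wconj (φ.rename ρ) (ψ.rename ρ)
  | .wdisj φ ψ => .wdisj (φ.rename ρ) (ψ.rename ρ)
  | .impl φ ψ => .impl (φ.rename ρ) (ψ.rename ρ)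
  | .all x φ => .all (ρ x) (φ.rename ρ)
  | .ex x φ => .ex (ρ x) (φ.rename ρ)

/-- All variables occurring in a formula (free or bound). -/
def Formula.avars : Formula L → Set ℕ
  | .rel _ ts => ⋃ i, (ts i).fvars
  | .eq t₁ t₂ => t₁.fvars ∪ t₂.fvars
  | .sconj φ ψ => φ.avars ∪ ψ.avars
  | .wconj φ ψ => φ.avars ∪ ψ.avars
  | .wdisj φ ψ => φ.avars ∪ ψ.avars
  | .impl φ ψ => φ.avars ∪ ψ.avars
  | .all x φ => insert x φ.avars
  | .ex x φ => insert x φ.avars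

lemma Formula.fvars_subset_avars : ∀ φ : Formula L, φ.fvars ⊆ φ.avars
  | .rel P ts => subset_rfl
  | .eq t₁ t₂ => subset_rfl
  | .sconj φ ψ => Set.union_subset_union φ.fvars_subset_avars ψ.fvars_subset_avars
  | .wconj φ ψ => Set.union_subset_union φ.fvars_subset_avars ψ.fvars_subset_avars
  | .wdisj φ ψ => Set.union_subset_union φ.fvars_subset_avars ψ.fvars_subset_avars
  | .impl φ ψ => Set.union_subset_union φ.fvars_subset_avars ψ.fvars_subset_avars
  | .all x φ => (Set.diff_subset).trans (φ.fvars_subset_avars.trans (Set.subset_insert x _))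
  | .ex x φ => (Set.diff_subset).trans (φ.fvars_subset_avars.trans (Set.subset_insert x _))

lemma Term.fvars_rename (ρ : ℕ → ℕ) : ∀ t : Term L, (t.rename ρ).fvars = ρ '' t.fvars
  | .var n => by simp [Term.rename, Term.fvars]
  | .func f ts => by
    simp only [Term.rename, Term.fvars, Set.image_iUnion]
    exact Set.iUnion_congr fun k => Term.fvars_rename ρ (ts k)

lemma Formula.fvars_rename {ρ : ℕ → ℕ} (hρ : Function.Injective ρ) :
    ∀ φ : Formula L, (φ.rename ρ).fvars = ρ '' φ.fvars
  | .rel P ts => by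
    simp only [Formula.rename, Formula.fvars, Set.image_iUnion]
    exact Set.iUnion_congr fun k => Term.fvars_rename ρ (ts k)
  | .eq t₁ t₂ => by
    simp only [Formula.rename, Formula.fvars, Set.image_union,
      Term.fvars_rename ρ t₁, Term.fvars_rename ρ t₂]
  | .sconj φ ψ => by
    simp only [Formula.rename, Formula.fvars, Set.image_union,
      Formula.fvars_rename hρ φ, Formula.fvars_rename hρ ψ]
  | .wconj φ ψ => by
    simp only [Formula.rename, Formula.fvars, Set.image_union,
      Formula.fvars_rename hρ φ, Formula.fvars_rename hρ ψ]
  | .wdisj φ ψ => by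
    simp only [Formula.rename, Formula.fvars, Set.image_union,
      Formula.fvars_rename hρ φ, Formula.fvars_rename hρ ψ]
  | .impl φ ψ => by
    simp only [Formula.rename, Formula.fvars, Set.image_union,
      Formula.fvars_rename hρ φ, Formula.fvars_rename hρ ψ]
  | .all x φ => by
    simp only [Formula.rename, Formula.fvars, Formula.fvars_rename hρ φ,
      Set.image_diff hρ, Set.image_singleton]
  | .ex x φ => by
    simp only [Formula.rename, Formula.fvars, Formula.fvars_rename hρ φ,
      Set.image_diff hρ, Set.image_singleton]

lemma Formula.avars_rename (ρ : ℕ → ℕ) :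
    ∀ φ : Formula L, (φ.rename ρ).avars = ρ '' φ.avars
  | .rel P ts => by
    simp only [Formula.rename, Formula.avars, Set.image_iUnion]
    exact Set.iUnion_congr fun k => Term.fvars_rename ρ (ts k)
  | .eq t₁ t₂ => by
    simp only [Formula.rename, Formula.avars, Set.image_union,
      Term.fvars_rename ρ t₁, Term.fvars_rename ρ t₂]
  | .sconj φ ψ => by
    simp only [Formula.rename, Formula.avars, Set.image_union,
      Formula.avars_rename ρ φ, Formula.avars_rename ρ ψ]
  | .wconj φ ψ => by
    simp only [Formula.rename, Formula.avars, Set.image_union,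
      Formula.avars_rename ρ φ, Formula.avars_rename ρ ψ]
  | .wdisj φ ψ => by
    simp only [Formula.rename, Formula.avars, Set.image_union,
      Formula.avars_rename ρ φ, Formula.avars_rename ρ ψ]
  | .impl φ ψ => by
    simp only [Formula.rename, Formula.avars, Set.image_union,
      Formula.avars_rename ρ φ, Formula.avars_rename ρ ψ]
  | .all x φ => by
    simp only [Formula.rename, Formula.avars, Formula.avars_rename ρ φ,
      Set.image_insert_eq]
  | .ex x φ => by
    simp only [Formula.rename, Formula.avars, Formula.avars_rename ρ φ,
      Set.image_insert_eq]

lemma Term.val_rename {M : Structure L A} (ρ : ℕ → ℕ) (v : ℕ → M.Dom) :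
    ∀ t : Term L, (t.rename ρ).val M v = t.val M (v ∘ ρ)
  | .var n => rfl
  | .func f ts => by
    simp only [Term.rename, Term.val]
    congr 1
    funext k
    exact Term.val_rename ρ v (ts k)

lemma update_comp_rename {D : Type u} {ρ : ℕ → ℕ} (hρ : Function.Injective ρ)
    (v : ℕ → D) (x : ℕ) (a : D) :
    (Function.update v (ρ x) a) ∘ ρ = Function.update (v ∘ ρ) x a := by
  funext n
  by_cases hx : n = x
  · subst hx; simp [Function.update]
  · have : ρ n ≠ ρ x := fun hc => hx (hρ hc)
    simp [Function.comp, Function.update_of_ne hx, Function.update_of_ne this]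

lemma Formula.val_rename {M : Structure L A} {ρ : ℕ → ℕ} (hρ : Function.Injective ρ) :
    ∀ (φ : Formula L) (v : ℕ → M.Dom), (φ.rename ρ).val M v = φ.val M (v ∘ ρ)
  | .rel P ts, v => by
    simp only [Formula.rename, Formula.val]
    congr 1
    funext k
    exact Term.val_rename ρ v (ts k)
  | .eq t₁ t₂, v => by
    simp only [Formula.rename, Formula.val, Term.val_rename]
  | .sconj φ ψ, v => by
    simp only [Formula.rename, Formula.val,
      Formula.val_rename hρ φ v, Formula.val_rename hρ ψ v]
  | .wconj φ ψ, v => by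
    simp only [Formula.rename, Formula.val,
      Formula.val_rename hρ φ v, Formula.val_rename hρ ψ v]
  | .wdisj φ ψ, v => by
    simp only [Formula.rename, Formula.val,
      Formula.val_rename hρ φ v, Formula.val_rename hρ ψ v]
  | .impl φ ψ, v => by
    simp only [Formula.rename, Formula.val,
      Formula.val_rename hρ φ v, Formula.val_rename hρ ψ v]
  | .all x φ, v => by
    simp only [Formula.rename, Formula.val]
    refine iInf_congr fun a => ?_
    rw [Formula.val_rename hρ φ _, update_comp_rename hρ]
  | .ex x φ, v => by
    simp only [Formula.rename, Formula.val]
    refine iSup_congr fun a => ?_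
    rw [Formula.val_rename hρ φ _, update_comp_rename hρ]

lemma IsAtomicFormula.rename {ρ : ℕ → ℕ} {φ : Formula L} (h : IsAtomicFormula φ) :
    IsAtomicFormula (φ.rename ρ) := by
  cases h with
  | rel P ts => exact IsAtomicFormula.rel P _
  | eq t₁ t₂ => exact IsAtomicFormula.eq _ _

lemma QFConj.rename {ρ : ℕ → ℕ} {φ : Formula L} (h : QFConj φ) :
    QFConj (φ.rename ρ) := by
  induction h with
  | atom ha => exact QFConj.atom ha.rename
  | sconj h₁ h₂ ih₁ ih₂ => exact QFConj.sconj ih₁ ih₂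
  | wconj h₁ h₂ ih₁ ih₂ => exact QFConj.wconj ih₁ ih₂

lemma IsPP.rename {ρ : ℕ → ℕ} {φ : Formula L} (h : IsPP φ) : IsPP (φ.rename ρ) := by
  induction h with
  | base hq => exact IsPP.base hq.rename
  | ex x hp ih => exact IsPP.ex _ ih

lemma Formula.isSentence_rename {ρ : ℕ → ℕ} (hρ : Function.Injective ρ)
    {φ : Formula L} (hs : φ.IsSentence) : (φ.rename ρ).IsSentence := by
  rw [Formula.IsSentence, Formula.fvars_rename hρ, hs, Set.image_empty]

lemma valid_rename_iff {M : Structure L A} {ρ : ℕ → ℕ} (hρ : Function.Injective ρ)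
    {φ : Formula L} (hs : φ.IsSentence) : Valid M (φ.rename ρ) ↔ Valid M φ := by
  constructor
  · intro h v
    have := h v
    rw [Formula.val_rename hρ φ v] at this
    rw [Formula.val_sentence hs v (v ∘ ρ)]
    exact this
  · intro h v
    rw [Formula.val_rename hρ φ v]
    exact h _

/-! ### Prenexing conjunctions of pp sentences -/

def pull2 : Formula L → Formula L → Formula L
  | φ, .ex y β => .ex y (pull2 φ β)
  | φ, β => .wconj φ β

def combine : Formula L → Formula L → Formula L
  | .ex x φ, β => .ex x (combine φ β)
  | φ, β => pull2 φ β

lemma pull2_qfconj {φ β : Formula L} (hβ : QFConj β) : pull2 φ β = .wconj φ β := by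
  cases hβ with
  | atom ha => cases ha with
    | rel P ts => rfl
    | eq t₁ t₂ => rfl
  | sconj h₁ h₂ => rfl
  | wconj h₁ h₂ => rfl

lemma combine_of_qfconj {φ β : Formula L} (hφ : QFConj φ) : combine φ β = pull2 φ β := by
  cases hφ with
  | atom ha => cases ha with
    | rel P ts => rfl
    | eq t₁ t₂ => rfl
  | sconj h₁ h₂ => rfl
  | wconj h₁ h₂ => rfl

lemma pull2_val {M : Structure L A} {φ β : Formula L} (hβ : IsPP β)
    (hdisj : ∀ n ∈ β.avars, n ∉ φ.fvars) :
    ∀ v : ℕ → M.Dom, (pull2 φ β).val M v = φ.val M v ⊓ β.val M v := by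
  induction hβ with
  | base hq => intro v; rw [pull2_qfconj hq]; rfl
  | @ex β' y hp ih =>
    intro v
    show (Formula.ex y (pull2 φ β')).val M v = _
    simp only [Formula.val]
    have h1 : ∀ a : M.Dom, (pull2 φ β').val M (Function.update v y a)
        = φ.val M v ⊓ β'.val M (Function.update v y a) := by
      intro a
      rw [ih (fun n hn => hdisj n (Set.mem_insert_iff.2 (Or.inr hn)))]
      congr 1
      refine Formula.val_congr fun n hn => ?_
      have : n ≠ y := fun hc => hdisj y (Set.mem_insert y _) (hc ▸ hn)
      rw [Function.update_of_ne this]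
    simp only [h1]
    rw [← MTL.inf_iSup]

lemma pull2_pp {φ β : Formula L} (hφ : QFConj φ) (hβ : IsPP β) : IsPP (pull2 φ β) := by
  induction hβ with
  | base hq => rw [pull2_qfconj hq]; exact IsPP.base (QFConj.wconj hφ hq)
  | ex y hp ih => exact IsPP.ex y ih

lemma pull2_fvars {φ β : Formula L} (hβ : IsPP β) :
    (pull2 φ β).fvars ⊆ φ.fvars ∪ β.fvars := by
  induction hβ with
  | base hq => rw [pull2_qfconj hq]; exact subset_rfl
  | @ex β' y hp ih =>
    show (Formula.ex y (pull2 φ β')).fvars ⊆ _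
    intro n hn
    obtain ⟨hn1, hn2⟩ := hn
    rcases ih hn1 with h | h
    · exact Or.inl h
    · exact Or.inr ⟨h, hn2⟩

lemma combine_val {M : Structure L A} {φ β : Formula L} (hφ : IsPP φ) (hβ : IsPP β)
    (hdisj : ∀ n ∈ φ.avars, n ∉ β.avars) :
    ∀ v : ℕ → M.Dom, (combine φ β).val M v = φ.val M v ⊓ β.val M v := by
  induction hφ with
  | base hq =>
    intro v
    rw [combine_of_qfconj hq]
    exact pull2_val hβ (fun n hn hc =>
      hdisj n (Formula.fvars_subset_avars _ hc) hn) v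
  | @ex φ' x hp ih =>
    intro v
    show (Formula.ex x (combine φ' β)).val M v = _
    simp only [Formula.val]
    have h1 : ∀ a : M.Dom, (combine φ' β).val M (Function.update v x a)
        = φ'.val M (Function.update v x a) ⊓ β.val M v := by
      intro a
      rw [ih (fun n hn => hdisj n (Set.mem_insert_iff.2 (Or.inr hn)))]
      congr 1
      refine Formula.val_congr fun n hn => ?_
      have hnx : n ≠ x := fun hc => by
        subst hc
        exact hdisj n (Set.mem_insert n _) (Formula.fvars_subset_avars β hn)
      rw [Function.update_of_ne hnx]
    simp only [h1]
    rw [← MTL.iSup_inf]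

lemma combine_pp {φ β : Formula L} (hφ : IsPP φ) (hβ : IsPP β) : IsPP (combine φ β) := by
  induction hφ with
  | base hq => rw [combine_of_qfconj hq]; exact pull2_pp hq hβ
  | ex x hp ih => exact IsPP.ex x ih

lemma combine_fvars {φ β : Formula L} (hφ : IsPP φ) (hβ : IsPP β) :
    (combine φ β).fvars ⊆ φ.fvars ∪ β.fvars := by
  induction hφ with
  | base hq => rw [combine_of_qfconj hq]; exact pull2_fvars hβ
  | @ex φ' x hp ih =>
    show (Formula.ex x (combine φ' β)).fvars ⊆ _
    intro n hn
    obtain ⟨hn1, hn2⟩ := hn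
    rcases ih hn1 with h | h
    · exact Or.inl ⟨h, hn2⟩
    · exact Or.inr h

/-- The trivially valid pp sentence. -/
def trivPP : Formula L := .ex 0 (.eq (.var 0) (.var 0))

lemma trivPP_pp : IsPP (trivPP : Formula L) :=
  IsPP.ex 0 (IsPP.base (QFConj.atom (IsAtomicFormula.eq _ _)))

lemma trivPP_sentence : (trivPP : Formula L).IsSentence := by
  simp [trivPP, Formula.IsSentence, Formula.fvars, Term.fvars]

lemma trivPP_valid (M : Structure L A) : Valid M (trivPP : Formula L) := by
  intro v
  simp only [trivPP, Formula.val, Term.val]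
  rw [MTL.iSup_eq_one_iff]
  exact ⟨Classical.arbitrary _, by simp⟩

def evenR : ℕ → ℕ := fun n => 2 * n
def oddR : ℕ → ℕ := fun n => 2 * n + 1

lemma evenR_inj : Function.Injective evenR := fun a b h => by
  simpa [evenR] using h

lemma oddR_inj : Function.Injective oddR := fun a b h => by
  simpa [oddR] using h

lemma evenR_oddR_disj (s t : Set ℕ) : ∀ n ∈ evenR '' s, n ∉ oddR '' t := by
  rintro n ⟨a, _, rfl⟩ ⟨b, _, hb⟩
  simp only [evenR, oddR] at hb
  omega

noncomputable def ppAll : List (Formula L) → Formula L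
  | [] => trivPP
  | γ :: l => combine (γ.rename evenR) ((ppAll l).rename oddR)

lemma ppAll_pp {l : List (Formula L)} (h : ∀ γ ∈ l, IsPP γ) : IsPP (ppAll l) := by
  induction l with
  | nil => exact trivPP_pp
  | cons γ l ih =>
    exact combine_pp ((h γ (List.mem_cons_self)).rename)
      ((ih (fun γ' hγ' => h γ' (List.mem_cons_of_mem γ hγ'))).rename)

lemma ppAll_sentence {l : List (Formula L)} (hpp : ∀ γ ∈ l, IsPP γ)
    (h : ∀ γ ∈ l, γ.IsSentence) : (ppAll l).IsSentence := by
  induction l with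
  | nil => exact trivPP_sentence
  | cons γ l ih =>
    have h1 := Formula.isSentence_rename evenR_inj (h γ (List.mem_cons_self))
    have h2 := Formula.isSentence_rename oddR_inj
      (ih (fun γ' hγ' => hpp γ' (List.mem_cons_of_mem γ hγ'))
          (fun γ' hγ' => h γ' (List.mem_cons_of_mem γ hγ')))
    have := combine_fvars ((hpp γ (List.mem_cons_self)).rename (ρ := evenR))
      ((ppAll_pp (fun γ' hγ' => hpp γ' (List.mem_cons_of_mem γ hγ'))).rename (ρ := oddR))
    rw [Formula.IsSentence] at h1 h2 ⊢
    rw [h1, h2] at this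
    exact (Set.subset_empty_iff.1 (by simpa using this) :
      (combine (γ.rename evenR) ((ppAll l).rename oddR)).fvars = ∅)

lemma ppAll_valid {M : Structure L A} {l : List (Formula L)}
    (hpp : ∀ γ ∈ l, IsPP γ) (hs : ∀ γ ∈ l, γ.IsSentence) :
    (Valid M (ppAll l) ↔ ∀ γ ∈ l, Valid M γ) := by
  induction l with
  | nil => simp [ppAll, trivPP_valid M]
  | cons γ l ih =>
    have hppγ := hpp γ (List.mem_cons_self)
    have hppl := ppAll_pp (fun γ' hγ' => hpp γ' (List.mem_cons_of_mem γ hγ'))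
    have hdisj : ∀ n ∈ (γ.rename evenR).avars, n ∉ ((ppAll l).rename oddR).avars := by
      rw [Formula.avars_rename, Formula.avars_rename]
      exact evenR_oddR_disj _ _
    have hval : ∀ v : ℕ → M.Dom, (ppAll (γ :: l)).val M v
        = (γ.rename evenR).val M v ⊓ ((ppAll l).rename oddR).val M v :=
      combine_val hppγ.rename hppl.rename hdisj
    constructor
    · intro h
      have hsplit : Valid M (γ.rename evenR) ∧ Valid M ((ppAll l).rename oddR) := by
        constructor
        · intro v
          have := h v
          rw [hval v, MTL.inf_eq_one] at this
          exact this.1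
        · intro v
          have := h v
          rw [hval v, MTL.inf_eq_one] at this
          exact this.2
      have hγ := (valid_rename_iff evenR_inj (hs γ (List.mem_cons_self))).1 hsplit.1
      have hl := (valid_rename_iff oddR_inj
        (ppAll_sentence (fun γ' hγ' => hpp γ' (List.mem_cons_of_mem γ hγ'))
          (fun γ' hγ' => hs γ' (List.mem_cons_of_mem γ hγ')))).1 hsplit.2
      intro γ' hγ'
      rcases List.mem_cons.1 hγ' with rfl | hmem
      · exact hγ
      · exact (ih (fun γ'' h'' => hpp γ'' (List.mem_cons_of_mem γ h''))
          (fun γ'' h'' => hs γ'' (List.mem_cons_of_mem γ h''))).1 hl γ' hmem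
    · intro h v
      rw [hval v, MTL.inf_eq_one]
      constructor
      · exact (valid_rename_iff evenR_inj (hs γ (List.mem_cons_self))).2
          (h γ (List.mem_cons_self)) v
      · refine (valid_rename_iff oddR_inj
          (ppAll_sentence (fun γ' hγ' => hpp γ' (List.mem_cons_of_mem γ hγ'))
            (fun γ' hγ' => hs γ' (List.mem_cons_of_mem γ hγ')))).2 ?_ v
        exact (ih (fun γ'' h'' => hpp γ'' (List.mem_cons_of_mem γ h''))
          (fun γ'' h'' => hs γ'' (List.mem_cons_of_mem γ h''))).2
          (fun γ' hγ' => h γ' (List.mem_cons_of_mem γ hγ'))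

/-! ### Lists of existential quantifiers and conjunctions -/

def exList : List ℕ → Formula L → Formula L
  | [], φ => φ
  | x :: xs, φ => .ex x (exList xs φ)

lemma exList_pp {xs : List ℕ} {φ : Formula L} (h : IsPP φ) : IsPP (exList xs φ) := by
  induction xs with
  | nil => exact h
  | cons x xs ih => exact IsPP.ex x ih

lemma exList_fvars (xs : List ℕ) (φ : Formula L) :
    (exList xs φ).fvars = φ.fvars \ {n | n ∈ xs} := by
  induction xs with
  | nil => simp [exList]
  | cons x xs ih =>
    show (Formula.ex x (exList xs φ)).fvars = _
    rw [Formula.fvars, ih, Set.diff_diff]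
    congr 1
    ext n
    simp [or_comm]

lemma exList_val_one_of {M : Structure L A} {xs : List ℕ} {φ : Formula L}
    {v w : ℕ → M.Dom} (hw : ∀ n, n ∉ xs → w n = v n) (h1 : φ.val M w = 1) :
    (exList xs φ).val M v = 1 := by
  induction xs generalizing v with
  | nil =>
    have : w = v := funext fun n => hw n List.not_mem_nil
    rw [← this]; exact h1
  | cons x xs ih =>
    show (Formula.ex x (exList xs φ)).val M v = 1
    rw [Formula.val, MTL.iSup_eq_one_iff]
    refine ⟨w x, ih fun n hn => ?_⟩
    by_cases hx : n = x
    · subst hx; simp [Function.update]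
    · rw [Function.update_of_ne hx]
      exact hw n (by simp [hx, hn])

lemma exList_val_extract {M : Structure L A} {xs : List ℕ} {φ : Formula L}
    {v : ℕ → M.Dom} (h : (exList xs φ).val M v = 1) :
    ∃ w : ℕ → M.Dom, (∀ n, n ∉ xs → w n = v n) ∧ φ.val M w = 1 := by
  induction xs generalizing v with
  | nil => exact ⟨v, fun _ _ => rfl, h⟩
  | cons x xs ih =>
    rw [show exList (x :: xs) φ = Formula.ex x (exList xs φ) from rfl,
      Formula.val, MTL.iSup_eq_one_iff] at h
    obtain ⟨a, ha⟩ := h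
    obtain ⟨w, hw1, hw2⟩ := ih ha
    refine ⟨w, fun n hn => ?_, hw2⟩
    have hnx : n ≠ x := fun hc => hn (hc ▸ List.mem_cons_self)
    have hnxs : n ∉ xs := fun hc => hn (List.mem_cons_of_mem x hc)
    rw [hw1 n hnxs, Function.update_of_ne hnx]

def conjList : List (Formula L) → Formula L
  | [] => .eq (.var 0) (.var 0)
  | γ :: l => .wconj γ (conjList l)

lemma conjList_qfconj {l : List (Formula L)} (h : ∀ γ ∈ l, IsAtomicFormula γ) :
    QFConj (conjList l) := by
  induction l with
  | nil => exact QFConj.atom (IsAtomicFormula.eq _ _)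
  | cons γ l ih =>
    exact QFConj.wconj (QFConj.atom (h γ (List.mem_cons_self)))
      (ih fun γ' hγ' => h γ' (List.mem_cons_of_mem γ hγ'))

lemma conjList_fvars (l : List (Formula L)) :
    (conjList l).fvars ⊆ insert 0 (⋃ γ ∈ l, γ.fvars) := by
  induction l with
  | nil =>
    intro n hn
    rcases hn with h | h
    · simp [Term.fvars] at h; simp [h]
    · simp [Term.fvars] at h; simp [h]
  | cons γ l ih =>
    intro n hn
    rcases hn with h | h
    · simp only [Set.mem_insert_iff, Set.mem_iUnion]
      exact Or.inr ⟨γ, List.mem_cons_self, h⟩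
    · rcases ih h with h' | h'
      · exact Or.inl h'
      · simp only [Set.mem_iUnion] at h'
        obtain ⟨γ', hγ', hmem⟩ := h'
        simp only [Set.mem_insert_iff, Set.mem_iUnion]
        exact Or.inr ⟨γ', List.mem_cons_of_mem γ hγ', hmem⟩

lemma conjList_val_one_iff {M : Structure L A} {l : List (Formula L)} {v : ℕ → M.Dom} :
    (conjList l).val M v = 1 ↔ ∀ γ ∈ l, γ.val M v = 1 := by
  induction l with
  | nil =>
    simp only [conjList, Formula.val, Term.val, if_pos rfl]
    simp
  | cons γ l ih =>
    show (Formula.wconj γ (conjList l)).val M v = 1 ↔ _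
    rw [Formula.val, MTL.inf_eq_one, ih]
    constructor
    · rintro ⟨h1, h2⟩ γ' hγ'
      rcases List.mem_cons.1 hγ' with rfl | hmem
      · exact h1
      · exact h2 γ' hmem
    · intro h
      exact ⟨h γ (List.mem_cons_self), fun γ' hγ' => h γ' (List.mem_cons_of_mem γ hγ')⟩

/-! ### Requirements for building homomorphisms -/

/-- Atomic requirements: positive relational facts and function-commutation facts. -/
abbrev Req (M : Structure L A) : Type u :=
  ({pd : Σ P : L.Pred, (Fin (L.predAr P) → M.Dom) // M.relMap pd.1 pd.2 = 1})
    ⊕ (Σ f : L.Func, (Fin (L.funcAr f) → M.Dom))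

/-- A map `σ` satisfies a requirement. -/
def ReqSat (M N : Structure L A) (σ : M.Dom → N.Dom) : Req M → Prop
  | Sum.inl pd => N.relMap pd.1.1 (fun k => σ (pd.1.2 k)) = 1
  | Sum.inr fd => σ (M.funMap fd.1 fd.2) = N.funMap fd.1 (fun k => σ (fd.2 k))

lemma exists_partial_hom {M N : Structure L A} (hbot : (⊥ : A) ≠ 1)
    (Hpp : ∀ γ : Formula L, IsPP γ → γ.IsSentence → Valid M γ → Valid N γ)
    (F : Finset (Req M)) :
    ∃ σ : M.Dom → N.Dom, ∀ r ∈ F, ReqSat M N σ r := by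
  classical
  set elemsOf : Req M → Finset M.Dom := fun r =>
    match r with
    | Sum.inl pd => Finset.image pd.1.2 Finset.univ
    | Sum.inr fd => insert (M.funMap fd.1 fd.2) (Finset.image fd.2 Finset.univ)
    with helems
  set E : Finset M.Dom := F.biUnion elemsOf with hE
  set lst : List M.Dom := E.toList with hlst
  set m : ℕ := lst.length with hm
  set idx : M.Dom → ℕ := fun e => lst.idxOf e with hidx
  have hidx_le : ∀ e, idx e ≤ m := fun e => List.idxOf_le_length
  set atomOf : Req M → Formula L := fun r =>
    match r with
    | Sum.inl pd => Formula.rel pd.1.1 (fun k => Term.var (idx (pd.1.2 k)))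
    | Sum.inr fd => Formula.eq (Term.var (idx (M.funMap fd.1 fd.2)))
        (Term.func fd.1 (fun k => Term.var (idx (fd.2 k))))
    with hatomOf
  set core : Formula L := conjList (F.toList.map atomOf) with hcore
  set β : Formula L := exList (List.range (m + 1)) core with hβ
  have hatom : ∀ γ ∈ F.toList.map atomOf, IsAtomicFormula γ := by
    intro γ hγ
    obtain ⟨r, hr, rfl⟩ := List.mem_map.1 hγ
    rcases r with pd | fd
    · exact IsAtomicFormula.rel _ _
    · exact IsAtomicFormula.eq _ _
  have hcoreq : QFConj core := conjList_qfconj hatom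
  have hatomfv : ∀ γ ∈ F.toList.map atomOf, γ.fvars ⊆ {n | n < m + 1} := by
    intro γ hγ
    obtain ⟨r, hr, rfl⟩ := List.mem_map.1 hγ
    rcases r with pd | fd
    · intro n hn
      simp only [hatomOf, Formula.fvars, Term.fvars, Set.mem_iUnion,
        Set.mem_singleton_iff] at hn
      obtain ⟨k, rfl⟩ := hn
      exact Nat.lt_succ_of_le (hidx_le _)
    · intro n hn
      simp only [hatomOf, Formula.fvars, Term.fvars, Set.mem_union, Set.mem_iUnion,
        Set.mem_singleton_iff] at hn
      rcases hn with rfl | ⟨k, rfl⟩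
      · exact Nat.lt_succ_of_le (hidx_le _)
      · exact Nat.lt_succ_of_le (hidx_le _)
  have hcorefv : core.fvars ⊆ {n | n < m + 1} := by
    intro n hn
    have h' := conjList_fvars _ hn
    rcases Set.mem_insert_iff.1 h' with rfl | h
    · exact Nat.succ_pos m
    · simp only [Set.mem_iUnion] at h
      obtain ⟨γ, hγ, hmem⟩ := h
      exact hatomfv γ hγ hmem
  have hβpp : IsPP β := exList_pp (IsPP.base hcoreq)
  have hβs : β.IsSentence := by
    rw [hβ, Formula.IsSentence, exList_fvars, Set.diff_eq_empty]
    intro n hn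
    simpa [List.mem_range] using hcorefv hn
  have hβM : Valid M β := by
    intro v
    set v₀ : ℕ → M.Dom := fun n =>
      if h : n < lst.length then lst.get ⟨n, h⟩ else Classical.arbitrary _ with hv₀def
    have hv₀ : ∀ e ∈ E, v₀ (idx e) = e := by
      intro e he
      have hmem : e ∈ lst := Finset.mem_toList.2 he
      have hlt : idx e < lst.length := List.idxOf_lt_length_iff.2 hmem
      simp only [hv₀def, dif_pos hlt]
      rw [List.get_eq_getElem]
      exact List.getElem_idxOf hlt
    have hcoreM : core.val M v₀ = 1 := by
      rw [hcore, conjList_val_one_iff]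
      intro γ hγ
      obtain ⟨r, hr, rfl⟩ := List.mem_map.1 hγ
      have hrF : r ∈ F := Finset.mem_toList.1 hr
      rcases r with pd | fd
      · show M.relMap pd.1.1 (fun k => Term.val M v₀ (Term.var (idx (pd.1.2 k)))) = 1
        have harg : (fun k => Term.val M v₀ (Term.var (idx (pd.1.2 k)))) = pd.1.2 := by
          funext k
          show v₀ (idx (pd.1.2 k)) = pd.1.2 k
          refine hv₀ _ (Finset.mem_biUnion.2 ⟨Sum.inl pd, hrF, ?_⟩)
          show pd.1.2 k ∈ Finset.image pd.1.2 Finset.univ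
          exact Finset.mem_image.2 ⟨k, Finset.mem_univ k, rfl⟩
        rw [harg]
        exact pd.2
      · show (if Term.val M v₀ (Term.var (idx (M.funMap fd.1 fd.2)))
            = Term.val M v₀ (Term.func fd.1 (fun k => Term.var (idx (fd.2 k))))
            then (1 : A) else ⊥) = 1
        have h1 : v₀ (idx (M.funMap fd.1 fd.2)) = M.funMap fd.1 fd.2 := by
          refine hv₀ _ (Finset.mem_biUnion.2 ⟨Sum.inr fd, hrF, ?_⟩)
          show M.funMap fd.1 fd.2 ∈ insert (M.funMap fd.1 fd.2) (Finset.image fd.2 Finset.univ)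
          exact Finset.mem_insert_self _ _
        have h2 : ∀ k, v₀ (idx (fd.2 k)) = fd.2 k := by
          intro k
          refine hv₀ _ (Finset.mem_biUnion.2 ⟨Sum.inr fd, hrF, ?_⟩)
          show fd.2 k ∈ insert (M.funMap fd.1 fd.2) (Finset.image fd.2 Finset.univ)
          exact Finset.mem_insert.2 (Or.inr (Finset.mem_image.2 ⟨k, Finset.mem_univ k, rfl⟩))
        rw [if_pos]
        show v₀ (idx (M.funMap fd.1 fd.2)) = M.funMap fd.1 (fun k => v₀ (idx (fd.2 k)))
        rw [h1]
        congr 1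
        funext k
        exact (h2 k).symm
    have hwv : ∀ n, n ∉ List.range (m + 1) → (fun n => if n < m + 1 then v₀ n else v n) n = v n := by
      intro n hn
      simp only [List.mem_range] at hn
      exact if_neg hn
    refine exList_val_one_of hwv ?_
    have := Formula.val_congr (M := M) (φ := core)
      (v := fun n => if n < m + 1 then v₀ n else v n) (w := v₀)
      (fun n hn => if_pos (hcorefv hn))
    rw [this]
    exact hcoreM
  have hβN : Valid N β := Hpp β hβpp hβs hβM
  obtain ⟨w, hw1, hw2⟩ := exList_val_extract (hβN (fun _ => Classical.arbitrary _))
  rw [hcore, conjList_val_one_iff] at hw2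
  refine ⟨fun e => w (idx e), ?_⟩
  intro r hrF
  have hwr := hw2 (atomOf r) (List.mem_map.2 ⟨r, Finset.mem_toList.2 hrF, rfl⟩)
  rcases r with pd | fd
  · exact hwr
  · show w (idx (M.funMap fd.1 fd.2)) = N.funMap fd.1 (fun k => w (idx (fd.2 k)))
    have hwr' : (if w (idx (M.funMap fd.1 fd.2))
        = N.funMap fd.1 (fun k => w (idx (fd.2 k))) then (1 : A) else ⊥) = 1 := hwr
    by_contra hc
    rw [if_neg hc] at hwr'
    exact hbot hwr'

/-! ### Step 1: models of the pp-consequences of φ are models of φ -/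

lemma step1 {φ : Formula L} (hφ : φ.IsSentence) (hbot : (⊥ : A) ≠ 1)
    (hcons : ∃ M : Structure L A, Valid M φ)
    (Hhom : ∀ (M N : Structure L A) (g : M.Dom → N.Dom),
      IsHom M N g → Valid M φ → Valid N φ)
    (Hprod : ∀ (I : Type u) [Nonempty I] (Ms : I → Structure L A),
        (∀ i, Valid (Ms i) φ) → ∀ W : WeakProdData Ms, Valid W.toStructure φ)
    (N : Structure L A)
    (hN : ∀ α : Formula L, IsPP α → α.IsSentence →
      (∀ M : Structure L A, Valid M φ → Valid M α) → Valid N α) :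
    Valid N φ := by
  classical
  -- the product of counterexample models for all pp sentences failing in N
  have hMs : ∀ β : {β : Formula L // IsPP β ∧ β.IsSentence ∧ ¬ Valid N β},
      ∃ M : Structure L A, Valid M φ ∧ ¬ Valid M β.1 := by
    intro β
    by_contra hc
    push_neg at hc
    exact β.2.2.2 (hN β.1 β.2.1 β.2.2.1 hc)
  choose Mb hMb1 hMb2 using hMs
  let J := {β : Formula L // IsPP β ∧ β.IsSentence ∧ ¬ Valid N β} ⊕ PUnit.{u + 1}
  haveI : Nonempty J := ⟨Sum.inr PUnit.unit⟩
  let Ms : J → Structure L A := Sum.elim Mb (fun _ => hcons.choose)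
  let W : WeakProdData Ms :=
    { relMap := fun P d => ⨅ j, (Ms j).relMap P (fun k => d k j)
      rel_one_iff := fun P d => MTL.iInf_eq_one_iff _ }
  set Mstar : Structure L A := W.toStructure with hMstardef
  have hMstar : Valid Mstar φ := by
    refine Hprod J Ms ?_ W
    rintro (β | u)
    · exact hMb1 β
    · exact hcons.choose_spec
  have hproj : ∀ j : J, IsHom Mstar (Ms j) (fun x => x j) := by
    intro j
    refine ⟨fun f d => rfl, fun P d h1 => ?_⟩
    exact (W.rel_one_iff P d).1 h1 j
  have Hpp : ∀ γ : Formula L, IsPP γ → γ.IsSentence → Valid Mstar γ → Valid N γ := by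
    intro γ hγ hγs hvγ
    by_contra hc
    exact hMb2 ⟨γ, hγ, hγs, hc⟩
      (IsPP.valid_hom hbot (hproj (Sum.inl ⟨γ, hγ, hγs, hc⟩)) hγ hγs hvγ)
  -- build an approximate homomorphism into an ultrapower of N
  choose σ hσ using fun F : Finset (Req Mstar) => exists_partial_hom hbot Hpp F
  haveI : Nonempty (Finset (Req Mstar)) := ⟨∅⟩
  obtain ⟨U, hU⟩ := Ultrafilter.exists_le (Filter.atTop : Filter (Finset (Req Mstar)))
  have hmemU : ∀ r : Req Mstar, {F : Finset (Req Mstar) | r ∈ F} ∈ U := by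
    intro r
    refine Filter.mem_of_superset (hU (Filter.mem_atTop ({r} : Finset (Req Mstar)))) ?_
    intro F hF
    exact Finset.singleton_subset_iff.1 hF
  set N' : Structure L A := UProd U (fun _ : Finset (Req Mstar) => N) with hN'def
  set g : Mstar.Dom → N'.Dom :=
    fun e => umk U (fun _ : Finset (Req Mstar) => N) (fun F => σ F e) with hgdef
  have hg : IsHom Mstar N' g := by
    constructor
    · intro f d
      show umk U (fun _ : Finset (Req Mstar) => N) (fun F => σ F (Mstar.funMap f d))
        = (UProd U (fun _ : Finset (Req Mstar) => N)).funMap f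
            (fun k => umk U (fun _ : Finset (Req Mstar) => N) (fun F => σ F (d k)))
      rw [uprod_funMap]
      refine (umk_eq_iff U _).2 ?_
      refine Filter.mem_of_superset (hmemU (Sum.inr ⟨f, d⟩)) fun F hF => ?_
      exact hσ F _ hF
    · intro P d h1
      show (UProd U (fun _ : Finset (Req Mstar) => N)).relMap P
          (fun k => umk U (fun _ : Finset (Req Mstar) => N) (fun F => σ F (d k))) = 1
      rw [uprod_relMap, limU_eq_one_iff]
      refine Filter.mem_of_superset (hmemU (Sum.inl ⟨⟨P, d⟩, h1⟩)) fun F hF => ?_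
      exact hσ F _ hF
  have hN' : Valid N' φ := Hhom Mstar N' g hg hMstar
  exact (upower_valid_iff U hφ).1 hN'

end Aux

/-- **Corollary: single-sentence pp-characterization.**  A consistent sentence
`φ` is 1-equivalent to a positive-primitive sentence iff the class of
`A`-models of `φ` is closed under homomorphisms and weak `A`-direct products. -/
theorem pp_single_sentence_char {A : Type u} [MTLChain A] {L : Lang.{u}}
    (φ : Formula L) (hφ : φ.IsSentence)
    (hcons : ∃ M : Structure L A, Valid M φ) :
    (∃ α : Formula L, IsPP α ∧ α.IsSentence ∧
        ∀ M : Structure L A, Valid M φ ↔ Valid M α) ↔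
      ((∀ (M N : Structure L A) (g : M.Dom → N.Dom),
          IsHom M N g → Valid M φ → Valid N φ) ∧
       (∀ (I : Type u) [Nonempty I] (Ms : I → Structure L A),
          (∀ i, Valid (Ms i) φ) → ∀ W : WeakProdData Ms, Valid W.toStructure φ)) := by
  classical
  by_cases hbot : (⊥ : A) = 1
  · -- degenerate case: `A` is trivial, every sentence is valid everywhere
    have htriv : ∀ (M : Structure L A) (ψ : Formula L), Valid M ψ := fun M ψ v =>
      MTL.subsingleton_of_bot_eq_one hbot _ _
    constructor
    · intro _
      exact ⟨fun M N g hg hM => htriv N φ, fun I _ Ms hMs W => htriv _ φ⟩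
    · intro _
      exact ⟨trivPP, trivPP_pp, trivPP_sentence, fun M => ⟨fun _ => htriv M _, fun _ => htriv M φ⟩⟩
  constructor
  · -- pp sentences are preserved by homomorphisms and weak products
    rintro ⟨α, hαpp, hαs, hαiff⟩
    constructor
    · intro M N g hg hM
      exact (hαiff N).2 (IsPP.valid_hom hbot hg hαpp hαs ((hαiff M).1 hM))
    · intro I _ Ms hMs W
      exact (hαiff _).2 (IsPP.valid_prod hbot W hαpp (fun i => (hαiff _).1 (hMs i)))
  · rintro ⟨Hhom, Hprod⟩
    set Sset : Set (Formula L) :=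
      {α | IsPP α ∧ α.IsSentence ∧ ∀ M : Structure L A, Valid M φ → Valid M α} with hSset
    have step1' : ∀ N : Structure L A, (∀ α ∈ Sset, Valid N α) → Valid N φ := by
      intro N hNS
      refine step1 hφ hbot hcons Hhom Hprod N ?_
      intro α h1 h2 h3
      exact hNS α ⟨h1, h2, h3⟩
    have hfin : ∃ T : Finset (Formula L), (↑T ⊆ Sset) ∧
        ∀ N : Structure L A, (∀ α ∈ T, Valid N α) → Valid N φ := by
      by_contra hc
      push_neg at hc
      haveI : Nonempty (Finset {α : Formula L // α ∈ Sset}) := ⟨∅⟩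
      have hNs : ∀ T : Finset {α : Formula L // α ∈ Sset},
          ∃ N : Structure L A, (∀ α ∈ T.image Subtype.val, Valid N α) ∧ ¬ Valid N φ := by
        intro T
        have hsub : ↑(T.image Subtype.val) ⊆ Sset := by
          intro α hα
          simp only [Finset.coe_image, Set.mem_image, Finset.mem_coe] at hα
          obtain ⟨⟨α', hα'⟩, _, rfl⟩ := hα
          exact hα'
        obtain ⟨N, hN1, hN2⟩ := hc (T.image Subtype.val) hsub
        exact ⟨N, hN1, hN2⟩
      choose Ns hNs1 hNs2 using hNs
      obtain ⟨U, hU⟩ := Ultrafilter.exists_le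
        (Filter.atTop : Filter (Finset {α : Formula L // α ∈ Sset}))
      have hNinf : ∀ α ∈ Sset, Valid (UProd U Ns) α := by
        intro α hα
        refine uprod_valid_of_ae U Ns ?_
        refine Filter.mem_of_superset
          (hU (Filter.mem_atTop ({⟨α, hα⟩} : Finset {α : Formula L // α ∈ Sset}))) ?_
        intro T hT
        refine hNs1 T α ?_
        exact Finset.mem_image.2 ⟨⟨α, hα⟩, Finset.singleton_subset_iff.1 hT, rfl⟩
      have hNfail : ¬ Valid (UProd U Ns) φ :=
        uprod_not_valid U Ns hφ (Filter.univ_mem' fun T => hNs2 T)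
      exact hNfail (step1' _ hNinf)
    obtain ⟨T, hTS, hTent⟩ := hfin
    have hppT : ∀ γ ∈ T.toList, IsPP γ := fun γ hγ =>
      (hTS (Finset.mem_coe.2 (Finset.mem_toList.1 hγ))).1
    have hsT : ∀ γ ∈ T.toList, γ.IsSentence := fun γ hγ =>
      (hTS (Finset.mem_coe.2 (Finset.mem_toList.1 hγ))).2.1
    refine ⟨ppAll T.toList, ppAll_pp hppT, ppAll_sentence hppT hsT, fun M => ?_⟩
    rw [ppAll_valid hppT hsT]
    constructor
    · intro hM γ hγ
      exact (hTS (Finset.mem_coe.2 (Finset.mem_toList.1 hγ))).2.2 M hM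
    · intro h
      exact hTent M (fun α hα => h α (Finset.mem_toList.2 hα))
end
end
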